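/- arXiv:2305.12803 — 6 statements merged into one kernel-verified Lean document; each statement's English description precedes it below -/
import Mathlib

section
/- If M and N are finitary matroids on a common ground set E satisfying Hall(M,N), then for every X ⊆ E the pair (M−X, N/X) satisfies Hall(M−X, N/X). -/
open Set Matroid
open scoped symmDiff

namespace AZ

variable {α : Type*}

/-- The contraction `M / X`, defined (in the standard way) as the dual of the
restriction of the dual to the complement of `X`. -/
def con (M : Matroid α) (X : Set α) : Matroid α := (M✶ ↾ (M.E \ X))✶

/-- The deletion `M − X := M ↾ (E ∖ X)`. -/
def del (M : Matroid α) (X : Set α) : Matroid α := M ↾ (M.E \ X)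

/-- The matroidal Hall condition `Hall(M,N)`: for every `X ⊆ E` such that `M ↾ X` has a
base that is independent in `N.X = N/(E∖X)`, also `N.X` has a base independent in `M ↾ X`. -/
def Hall (M N : Matroid α) : Prop :=
  ∀ X ⊆ N.E,
    (∃ B, (M ↾ X).IsBase B ∧ (con N (N.E \ X)).Indep B) →
    ∃ B, (con N (N.E \ X)).IsBase B ∧ (M ↾ X).Indep B

/-- `(M,N)` is finitely matchable: every finite `F ⊆ E` is `N`-spanned by an
`M`-independent set. -/
def FinitelyMatchable (M N : Matroid α) : Prop :=
  ∀ F ⊆ M.E, F.Finite → ∃ I, M.Indep I ∧ F ⊆ N.closure I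

/-- `G ⊆ E` is `(M,N)`-negligible: for all finite `X ⊆ G` and finite `Y ⊆ E ∖ G` there
is an `M/Y`-independent set that `N`-spans `X`. -/
def Negligible (M N : Matroid α) (G : Set α) : Prop :=
  G ⊆ M.E ∧
    ∀ X ⊆ G, X.Finite → ∀ Y ⊆ M.E \ G, Y.Finite →
      ∃ I, (con M Y).Indep I ∧ X ⊆ N.closure I

/-- A common independent set `I` of `M` and `N` is `(M,N)`-stable if every `J ⊆ E ∖ I`
that is independent in `M/I` and in `N` is also independent in `N/I`. -/
def Stable (M N : Matroid α) (I : Set α) : Prop :=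
  M.Indep I ∧ N.Indep I ∧
    ∀ J ⊆ M.E \ I, (con M I).Indep J → N.Indep J → (con N I).Indep J

/-- A circuit of a matroid: a minimal dependent subset of the ground set. -/
def Circuit (M : Matroid α) (C : Set α) : Prop :=
  C ⊆ M.E ∧ ¬ M.Indep C ∧ ∀ D ⊂ C, M.Indep D

/-- The arc relation of the exchange digraph `D(I)`: for `x ∈ E ∖ I` and `y ∈ I` there is
an arc `x → y` if `x ∈ span_M(I)` and `y` lies in the unique `M`-circuit contained in
`I + x`, and an arc `y → x` if `x ∈ span_N(I)` and `y` lies in the unique `N`-circuit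
contained in `I + x`. -/
def Arc (M N : Matroid α) (I : Set α) (x y : α) : Prop :=
  (x ∈ M.E \ I ∧ y ∈ I ∧ x ∈ M.closure I ∧
    ∃ C, Circuit M C ∧ C ⊆ insert x I ∧ x ∈ C ∧ y ∈ C) ∨
  (x ∈ I ∧ y ∈ M.E \ I ∧ y ∈ N.closure I ∧
    ∃ C, Circuit N C ∧ C ⊆ insert y I ∧ y ∈ C ∧ x ∈ C)

/-- `Reach M N I x` is `E(x,I)`: the set of elements reachable from `x` by a directed
path in `D(I)`. -/
def Reach (M N : Matroid α) (I : Set α) (x : α) : Set α :=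
  {y | Relation.ReflTransGen (Arc M N I) x y}

/-- `P = {f 0, …, f (2n)}` is an `xy`-augmenting path for `I`: it starts at
`x = f 0 ∉ span_N(I)`, ends at `y = f (2n) ∉ span_M(I)`, consecutive elements are joined
by arcs of `D(I)`, and there are no jumping arcs. -/
def IsAugPath (M N : Matroid α) (I P : Set α) (x y : α) : Prop :=
  ∃ (n : ℕ) (f : ℕ → α),
    P = f '' Set.Iic (2 * n) ∧ P ⊆ M.E ∧ Set.InjOn f (Set.Iic (2 * n)) ∧
    f 0 = x ∧ f (2 * n) = y ∧
    x ∉ N.closure I ∧ y ∉ M.closure I ∧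
    (∀ i < 2 * n, Arc M N I (f i) (f (i + 1))) ∧
    (∀ i j, i + 1 < j → j ≤ 2 * n → ¬ Arc M N I (f i) (f j))

/-- One augmentation step: `J = I △ P` for some augmenting path `P` for `I`. -/
def AugStep (M N : Matroid α) (I J : Set α) : Prop :=
  ∃ P x y, IsAugPath M N I P x y ∧ J = I ∆ P

/-- `J ∈ A(I)`: `J` is obtained from `I` by finitely many successive augmentations. -/
def MemA (M N : Matroid α) (I J : Set α) : Prop :=
  Relation.ReflTransGen (AugStep M N) I J

/-- `O = {f 0, …, f (2n+1)}` is a switching cycle for `I`: the arcs of `D(I)` inside `O`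
are exactly the arcs `f i → f (i+1 mod 2n+2)`, forming a chordless directed cycle. -/
def SwitchCycle (M N : Matroid α) (I O : Set α) : Prop :=
  ∃ (n : ℕ) (f : ℕ → α),
    O = f '' Set.Iio (2 * n + 2) ∧ O ⊆ M.E ∧ Set.InjOn f (Set.Iio (2 * n + 2)) ∧
    ∀ i < 2 * n + 2, ∀ j < 2 * n + 2,
      (Arc M N I (f i) (f j) ↔ j = (i + 1) % (2 * n + 2))

/-- The preorder on finite common independent sets: `I ⊴ J` iff
`I ⊆ span_M(J) ∩ span_N(J)`. -/
def Le (M N : Matroid α) (I J : Set α) : Prop :=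
  I ⊆ M.closure J ∩ N.closure J

/-- The equivalence relation: `I ∼ J` iff `I ⊴ J` and `J ⊴ I`. -/
def Sim (M N : Matroid α) (I J : Set α) : Prop :=
  Le M N I J ∧ Le M N J I

/-- A family of finite common independent sets of `M` and `N` that is closed under `∼`
and is `⊴`-directed. -/
def DirFam (M N : Matroid α) (D : Set (Set α)) : Prop :=
  (∀ I ∈ D, I.Finite ∧ M.Indep I ∧ N.Indep I) ∧
  (∀ I ∈ D, ∀ J, J.Finite → M.Indep J → N.Indep J → Sim M N I J → J ∈ D) ∧
  (∀ I ∈ D, ∀ J ∈ D, ∃ K ∈ D, Le M N I K ∧ Le M N J K)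

/-- A maximal directed family of finite common independent sets. -/
def MaxDirFam (M N : Matroid α) (D : Set (Set α)) : Prop :=
  DirFam M N D ∧ ∀ D', DirFam M N D' → D ⊆ D' → D' = D

/-- If `Hall(M,N)` holds, then `Hall(M−X, N/X)` holds for every `X ⊆ E`. -/
theorem statement1 (M N : Matroid α) [M.Finitary] [N.Finitary] (hE : M.E = N.E)
    (hHall : Hall M N) (X : Set α) (hX : X ⊆ M.E) : Hall (del M X) (con N X) := by
  have hconE : (con N X).E = N.E \ X := by simp [con]
  intro Y hY
  rw [hconE] at hY
  have hYN : Y ⊆ N.E := hY.trans diff_subset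
  -- the restriction of `del M X` to `Y` is just `M ↾ Y`
  have hrestr : (del M X) ↾ Y = M ↾ Y := by
    rw [del, restrict_restrict_eq]
    rw [hE]; exact hY
  -- the double contraction collapses
  have hcon : con (con N X) ((con N X).E \ Y) = con N (N.E \ Y) := by
    rw [con, con, con, dual_dual]
    simp only [dual_ground, restrict_ground_eq]
    congr 1
    rw [restrict_restrict_eq]
    · congr 1
      rw [diff_diff_right_self, inter_eq_self_of_subset_right hY,
        diff_diff_right_self, inter_eq_self_of_subset_right hYN]
    · exact diff_subset
  rw [hrestr, hcon]
  exact hHall Y hYN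

end AZ
end

section
/- If G ⊆ E is (M,N)-negligible and the pair (M−G, N/G) is finitely matchable, then the pair (M,N) is finitely matchable. -/
open Set Matroid
open scoped symmDiff

namespace AZ

variable {α : Type*}

lemma con_indep_iff {M : Matroid α} {C J : Set α} :
    (con M C).Indep J ↔ J ⊆ M.E \ C ∧ ∃ B, M✶.IsBasis' B (M.E \ C) ∧ Disjoint J B := by
  rw [con, dual_indep_iff_exists']
  simp only [restrict_ground_eq]
  constructor
  · rintro ⟨h1, B, hB, h2⟩
    exact ⟨h1, B, isBase_restrict_iff'.mp hB, h2⟩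
  · rintro ⟨h1, B, hB, h2⟩
    exact ⟨h1, B, isBase_restrict_iff'.mpr hB, h2⟩

/-- Forward direction: a `con M C`-independent set, together with a basis of `C`,
is `M`-independent. -/
lemma con_indep_union_basis_indep {M : Matroid α} {C C₀ J : Set α} (hC : C ⊆ M.E)
    (hC₀ : M.IsBasis' C₀ C) (hJ : (con M C).Indep J) : M.Indep (J ∪ C₀) := by
  obtain ⟨hJE, B, hB, hJB⟩ := con_indep_iff.mp hJ
  obtain ⟨hBE, B₁, hB₁, hBB₁⟩ := (dual_indep_iff_exists').mp hB.indep
  have hC₀C : C₀ ⊆ C := hC₀.subset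
  have hC₀BC : C₀ ⊆ B₁ ∪ C := hC₀C.trans subset_union_right
  obtain ⟨D, hD, hC₀D⟩ := hC₀.indep.subset_isBasis'_of_subset hC₀BC
  have hBCE : B₁ ∪ C ⊆ M.E := union_subset hB₁.subset_ground hC
  have hDbase : M.IsBase D := (hD.isBasis hBCE).isBase_of_isBase_subset hB₁ subset_union_left
  have hDB : Disjoint D B := by
    refine Disjoint.mono_left hD.subset ?_
    refine disjoint_union_left.mpr ⟨hBB₁.symm, ?_⟩
    exact disjoint_right.mpr fun x hx => (hB.subset hx).2
  -- (M.E \ D) \ C is M✶-independent, contains B, contained in M.E \ C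
  have hcompl : M✶.Indep ((M.E \ D) \ C) :=
    hDbase.compl_isBase_dual.indep.subset diff_subset
  have hBsub : B ⊆ (M.E \ D) \ C := by
    intro x hx
    exact ⟨⟨hB.subset hx |>.1, fun hxD => hDB.ne_of_mem hxD hx rfl⟩, (hB.subset hx).2⟩
  have hEq : B = (M.E \ D) \ C :=
    hB.eq_of_subset_indep hcompl hBsub (fun x hx => ⟨hx.1.1, hx.2⟩)
  -- hence J ⊆ D
  have hJD : J ⊆ D := by
    intro x hxJ
    have hxE := hJE hxJ
    by_contra hxD
    have : x ∈ B := hEq ▸ ⟨⟨hxE.1, hxD⟩, hxE.2⟩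
    exact hJB.ne_of_mem hxJ this rfl
  exact hDbase.indep.subset (union_subset hJD hC₀D)

lemma IsBasis'.eq_of_subset_indep' {M : Matroid α} {I X J : Set α} (hI : M.IsBasis' I X)
    (hJ : M.Indep J) (hIJ : I ⊆ J) (hJX : J ⊆ X) : I = J :=
  hIJ.antisymm (hI.2 ⟨hJ, hJX⟩ hIJ)

/-- Backward direction. -/
lemma con_indep_of_union_basis_indep {M : Matroid α} {C C₀ J : Set α} (hC : C ⊆ M.E)
    (hC₀ : M.IsBasis' C₀ C) (hJE : J ⊆ M.E \ C) (hJ : M.Indep (J ∪ C₀)) :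
    (con M C).Indep J := by
  obtain ⟨D, hD, hsub⟩ := hJ.exists_isBase_superset
  have hC₀D : C₀ ⊆ D := subset_union_right.trans hsub
  have hC₀C : C₀ ⊆ C := hC₀.subset
  refine con_indep_iff.mpr ⟨hJE, M.E \ (D ∪ C), ?_, ?_⟩
  · -- IsBasis' : Maximal
    constructor
    · constructor
      · exact hD.compl_isBase_dual.indep.subset
          (fun x hx => ⟨hx.1, fun hxD => hx.2 (Or.inl hxD)⟩)
      · exact fun x hx => ⟨hx.1, fun hxC => hx.2 (Or.inr hxC)⟩
    · rintro A ⟨hAindep, hAE⟩ hBA x hxA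
      by_contra hxB
      have hxE : x ∈ M.E := (hAE hxA).1
      have hxC : x ∉ C := (hAE hxA).2
      have hxD : x ∈ D := by
        by_contra hxD
        exact hxB ⟨hxE, fun h => h.elim hxD hxC⟩
      -- insert x (M.E \ (D ∪ C)) is M✶-indep
      have hins : M✶.Indep (insert x (M.E \ (D ∪ C))) :=
        hAindep.subset (insert_subset hxA hBA)
      obtain ⟨hinsE, D'', hD'', hdisj⟩ := (dual_indep_iff_exists').mp hins
      have hD''sub : D'' ⊆ (D \ {x}) ∪ C := by
        intro y hy
        have hyE : y ∈ M.E := hD''.subset_ground hy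
        have hy' : y ∉ insert x (M.E \ (D ∪ C)) :=
          fun h => hdisj.ne_of_mem h hy rfl
        by_cases hyC : y ∈ C
        · exact Or.inr hyC
        · have hyD : y ∈ D := by
            by_contra hyD
            exact hy' (Or.inr ⟨hyE, fun h => h.elim hyD hyC⟩)
          have hyx : y ≠ x := fun h => hy' (Or.inl h)
          exact Or.inl ⟨hyD, hyx⟩
      -- x ∈ closure (D \ {x})
      have hC₀D' : C₀ ⊆ D \ {x} :=
        fun y hy => ⟨hC₀D hy, fun h => hxC (h ▸ hC₀C hy)⟩
      have hxcl : x ∈ M.closure (D \ {x}) := by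
        have h1 : x ∈ M.closure D'' := by
          rw [hD''.closure_eq]; exact hxE
        have h2 : M.closure D'' ⊆ M.closure ((D \ {x}) ∪ C) :=
          M.closure_subset_closure hD''sub
        have hCcl : C ⊆ M.closure C₀ := by
          rw [hC₀.closure_eq_closure]; exact M.subset_closure C hC
        have h3 : (D \ {x}) ∪ C ⊆ M.closure ((D \ {x}) ∪ C₀) := by
          apply union_subset
          · exact (M.subset_closure _ (diff_subset.trans hD.subset_ground)).trans
              (M.closure_subset_closure subset_union_left)
          · exact hCcl.trans (M.closure_subset_closure subset_union_right)
        have h4 : M.closure ((D \ {x}) ∪ C) ⊆ M.closure ((D \ {x}) ∪ C₀) :=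
          closure_subset_closure_of_subset_closure h3
        have h5 : (D \ {x}) ∪ C₀ = D \ {x} := union_eq_self_of_subset_right hC₀D'
        exact h5 ▸ h4 (h2 h1)
      exact hD.indep.notMem_closure_sdiff_of_mem hxD hxcl
  · exact disjoint_right.mpr fun y hy => fun hyJ =>
      hy.2 (Or.inl (hsub (Or.inl hyJ)))


/-- Closure in the contraction is contained in closure of the union. -/
lemma con_closure_subset {M : Matroid α} {C X : Set α} (hC : C ⊆ M.E) :
    (con M C).closure X ⊆ M.closure (X ∪ C) := by
  obtain ⟨C₀, hC₀⟩ := M.exists_isBasis' C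
  obtain ⟨J, hJb⟩ := (con M C).exists_isBasis' X
  have hJX : J ⊆ X := hJb.subset
  have hJi : (con M C).Indep J := hJb.indep
  have hJE : J ⊆ M.E \ C := hJi.subset_ground
  have hJC₀ : M.Indep (J ∪ C₀) := con_indep_union_basis_indep hC hC₀ hJi
  have hmono : M.closure (J ∪ C₀) ⊆ M.closure (X ∪ C) :=
    M.closure_subset_closure (union_subset_union hJX hC₀.subset)
  intro f hf
  rw [← hJb.closure_eq_closure] at hf
  by_cases hfJ : f ∈ J
  · exact hmono (M.subset_closure _ hJC₀.subset_ground (Or.inl hfJ))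
  · have hdep : (con M C).Dep (insert f J) := by
      rcases hJi.mem_closure_iff.mp hf with hd | hfJ'
      · exact hd
      · exact absurd hfJ' hfJ
    have hfE : f ∈ M.E \ C := hdep.subset_ground (mem_insert f J)
    have hni : ¬ M.Indep (insert f (J ∪ C₀)) := by
      intro hind
      have : (con M C).Indep (insert f J) := by
        refine con_indep_of_union_basis_indep hC hC₀ (insert_subset hfE hJE) ?_
        rwa [insert_union]
      exact hdep.not_indep this
    have hfJC₀ : f ∉ J ∪ C₀ := by
      rintro (h | h); exact hfJ h; exact hfE.2 (hC₀.subset h)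
    have : f ∈ M.closure (J ∪ C₀) := by
      by_contra hcl
      exact hni ((hJC₀.insert_indep_iff_of_notMem hfJC₀).mpr ⟨hfE.1, hcl⟩)
    exact hmono this

/-- Finitary closure decomposition. -/
lemma exists_finite_subset_closure {M : Matroid α} [M.Finitary] {S : Set α} {f : α}
    (hf : f ∈ M.closure S) : ∃ S₀ ⊆ S, S₀.Finite ∧ f ∈ M.closure S₀ := by
  obtain ⟨J, hJ⟩ := M.exists_isBasis' S
  rw [← hJ.closure_eq_closure] at hf
  by_cases hfJ : f ∈ J
  · exact ⟨{f}, singleton_subset_iff.mpr (hJ.subset hfJ), finite_singleton f,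
      M.subset_closure {f} (singleton_subset_iff.mpr (M.closure_subset_ground _ hf)) rfl⟩
  · have hdep : M.Dep (insert f J) := by
      rcases hJ.indep.mem_closure_iff.mp hf with hd | h
      · exact hd
      · exact absurd h hfJ
    obtain ⟨T, hTsub, hTfin, hTdep⟩ : ∃ T ⊆ insert f J, T.Finite ∧ ¬ M.Indep T := by
      by_contra hcon
      push_neg at hcon
      exact hdep.not_indep (indep_of_forall_finite_subset_indep _
        (fun T hT hTf => hcon T hT hTf))
    have hfT : f ∈ T := by
      by_contra hfT
      exact hTdep (hJ.indep.subset (fun x hx => ((hTsub hx).resolve_left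
        (fun h => hfT (h ▸ hx)))))
    have hT'sub : T \ {f} ⊆ J := fun x hx =>
      ((hTsub hx.1).resolve_left hx.2)
    have hT'i : M.Indep (T \ {f}) := hJ.indep.subset hT'sub
    refine ⟨T \ {f}, hT'sub.trans hJ.subset, hTfin.diff, ?_⟩
    by_contra hcl
    have : M.Indep (insert f (T \ {f})) :=
      (hT'i.insert_indep_iff_of_notMem (fun h => h.2 rfl)).mpr
        ⟨hdep.subset_ground (mem_insert f J), hcl⟩
    rw [insert_diff_singleton, insert_eq_of_mem hfT] at this
    exact hTdep this


theorem statement2_aux (M N : Matroid α) [M.Finitary] [N.Finitary] (hE : M.E = N.E)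
    (G : Set α) (hG : Negligible M N G)
    (h : FinitelyMatchable (del M G) (con N G)) : FinitelyMatchable M N := by
  obtain ⟨hGE, hneg⟩ := hG
  intro F hF hFfin
  have hNE : G ⊆ N.E := hE ▸ hGE
  have hF2E : F \ G ⊆ (del M G).E := by
    rw [del, restrict_ground_eq]
    exact fun x hx => ⟨hF hx.1, hx.2⟩
  obtain ⟨I, hI, hFI⟩ := h (F \ G) hF2E (hFfin.diff)
  rw [del, restrict_indep_iff] at hI
  obtain ⟨hIi, hIE⟩ := hI
  have hIN : ∀ f ∈ F \ G, f ∈ N.closure (I ∪ G) := fun f hf =>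
    con_closure_subset hNE (hFI hf)
  have hchoice : ∀ f ∈ F \ G, ∃ S₀ ⊆ I ∪ G, S₀.Finite ∧ f ∈ N.closure S₀ :=
    fun f hf => exists_finite_subset_closure (hIN f hf)
  choose! S hSsub hSfin hScl using hchoice
  set T := ⋃ f ∈ F \ G, S f with hT
  have hTfin : T.Finite := (hFfin.diff).biUnion (fun f hf => hSfin f hf)
  set I' := T ∩ I with hI'def
  set G₀ := T ∩ G with hG₀def
  have hI'fin : I'.Finite := hTfin.inter_of_left I
  have hG₀fin : G₀.Finite := hTfin.inter_of_left G
  have hI'E : I' ⊆ M.E \ G := inter_subset_right.trans hIE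
  have hXG : (F ∩ G) ∪ G₀ ⊆ G := union_subset inter_subset_right inter_subset_right
  obtain ⟨J, hJ, hXJ⟩ := hneg ((F ∩ G) ∪ G₀) hXG
    ((hFfin.inter_of_left _).union hG₀fin) I' hI'E hI'fin
  have hI'i : M.Indep I' := hIi.subset inter_subset_right
  have hKi : M.Indep (J ∪ I') :=
    con_indep_union_basis_indep (hI'E.trans diff_subset) hI'i.isBasis_self.isBasis' hJ
  set K := J ∪ I' with hKdef
  have hKE : K ⊆ N.E := hE ▸ hKi.subset_ground
  have hJcl : N.closure J ⊆ N.closure K := N.closure_subset_closure subset_union_left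
  refine ⟨K, hKi, fun f hfF => ?_⟩
  by_cases hfG : f ∈ G
  · exact hJcl (hXJ (Or.inl ⟨hfF, hfG⟩))
  · have hf : f ∈ F \ G := ⟨hfF, hfG⟩
    have h1 : f ∈ N.closure (I' ∪ G₀) := by
      apply N.closure_subset_closure _ (hScl f hf)
      intro x hx
      rcases hSsub f hf hx with hxI | hxG
      · exact Or.inl ⟨mem_biUnion hf hx, hxI⟩
      · exact Or.inr ⟨mem_biUnion hf hx, hxG⟩
    have h2 : I' ∪ G₀ ⊆ N.closure K := by
      apply union_subset
      · exact subset_union_right.trans (N.subset_closure K hKE)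
      · exact fun x hx => hJcl (hXJ (Or.inr hx))
    exact closure_subset_closure_of_subset_closure h2 h1

/-- If `G` is `(M,N)`-negligible and `(M−G, N/G)` is finitely matchable, then `(M,N)` is
finitely matchable. -/
theorem statement2 (M N : Matroid α) [M.Finitary] [N.Finitary] (hE : M.E = N.E)
    (G : Set α) (hG : Negligible M N G)
    (h : FinitelyMatchable (del M G) (con N G)) : FinitelyMatchable M N :=
  statement2_aux M N hE G hG h

end AZ
end

section
/- For every family ℱ of (M,N)-stable sets there exists a single (M,N)-stable set I ⊆ ⋃ℱ with ⋃ℱ ⊆ span_M(I). -/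
open Set Matroid
open scoped symmDiff

namespace AZ

variable {α : Type*}

/-- Independence in the contraction `con M X`, for `X` independent. -/
lemma con_indep_iff_s7 {M : Matroid α} {X J : Set α} (hX : M.Indep X) :
    (con M X).Indep J ↔ Disjoint J X ∧ M.Indep (X ∪ J) := by
  have hXE : X ⊆ M.E := hX.subset_ground
  have hdiffE : M.E \ X ⊆ M✶.E := by rw [dual_ground]; exact diff_subset
  have hcon : (con M X).Indep J ↔
      J ⊆ M.E \ X ∧ ∃ B, M✶.IsBasis B (M.E \ X) ∧ Disjoint J B := by
    rw [con, dual_indep_iff_exists']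
    refine and_congr (by rw [restrict_ground_eq])
      (exists_congr fun B => and_congr_left fun _ => ?_)
    rw [isBase_restrict_iff', isBasis'_iff_isBasis hdiffE]
  have hspanX : M✶.Spanning (M.E \ X) := by
    have h1 : M✶.Coindep X := dual_coindep_iff.mpr hX
    have h2 := (coindep_iff_compl_spanning (M := M✶) (I := X) hXE).mp h1
    simpa using h2
  rw [hcon]
  constructor
  · rintro ⟨hJss, B, hB, hJB⟩
    have hJX : Disjoint J X := (subset_diff.mp hJss).2
    have hBspan : M✶.Spanning B := by
      rw [spanning_iff_closure_eq hB.indep.subset_ground, hB.closure_eq_closure]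
      exact hspanX.closure_eq
    have hBsub : B ⊆ M.E \ (X ∪ J) := by
      intro b hb
      refine ⟨(hB.subset hb).1, ?_⟩
      rintro (h | h)
      · exact (hB.subset hb).2 h
      · exact disjoint_left.mp hJB.symm hb h
    have hspan2 : M✶.Spanning (M.E \ (X ∪ J)) :=
      hBspan.superset hBsub (by rw [dual_ground]; exact diff_subset)
    have hXJE : X ∪ J ⊆ M.E := union_subset hXE (hJss.trans diff_subset)
    refine ⟨hJX, dual_coindep_iff.mp ?_⟩
    exact (coindep_iff_compl_spanning (M := M✶) (I := X ∪ J) hXJE).mpr (by simpa using hspan2)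
  · rintro ⟨hJX, hXJ⟩
    have hXJE : X ∪ J ⊆ M.E := hXJ.subset_ground
    have hJE : J ⊆ M.E := subset_union_right.trans hXJE
    have hJss : J ⊆ M.E \ X := subset_diff.mpr ⟨hJE, hJX⟩
    have hspan2 : M✶.Spanning (M.E \ (X ∪ J)) := by
      have h1 : M✶.Coindep (X ∪ J) := dual_coindep_iff.mpr hXJ
      have h2 := (coindep_iff_compl_spanning (M := M✶) (I := X ∪ J) hXJE).mp h1
      simpa using h2
    obtain ⟨B, hB⟩ := M✶.exists_isBasis (M.E \ (X ∪ J))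
      (by rw [dual_ground]; exact diff_subset)
    have hclB : M✶.closure B = M✶.E := by
      rw [hB.closure_eq_closure]; exact hspan2.closure_eq
    have hB2 : M✶.IsBasis B (M.E \ X) := by
      refine hB.indep.isBasis_of_subset_of_subset_closure
        (hB.subset.trans (diff_subset_diff_right subset_union_left)) ?_
      rw [hclB, dual_ground]; exact diff_subset
    have hBd : Disjoint B J :=
      ((subset_diff.mp hB.subset).2).mono_right subset_union_right
    exact ⟨hJss, B, hB2, hBd.symm⟩

/-- The key consequence of stability. -/
lemma Stable.indep_union {M N : Matroid α} {I J : Set α} (hI : Stable M N I)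
    (hJ : J ⊆ M.E \ I) (hMIJ : M.Indep (I ∪ J)) (hNJ : N.Indep J) : N.Indep (I ∪ J) := by
  have h1 : (con M I).Indep J := (con_indep_iff_s7 hI.1).mpr ⟨(subset_diff.mp hJ).2, hMIJ⟩
  have h2 : (con N I).Indep J := hI.2.2 J hJ h1 hNJ
  exact ((con_indep_iff_s7 hI.2.1).mp h2).2

lemma stable_empty (M N : Matroid α) : Stable M N ∅ := by
  refine ⟨M.empty_indep, N.empty_indep, fun J _ _ hNJ => ?_⟩
  exact (con_indep_iff_s7 N.empty_indep).mpr ⟨disjoint_empty _ |>.symm.symm, by simpa using hNJ⟩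

/-- A finite subset of the union of a nonempty chain lies in one member. -/
lemma finite_subset_chain_sUnion {c : Set (Set α)} (hc : IsChain (· ⊆ ·) c)
    (hne : c.Nonempty) {D : Set α} (hD : D.Finite) (hDc : D ⊆ ⋃₀ c) :
    ∃ I ∈ c, D ⊆ I := by
  refine Set.Finite.induction_on (motive := fun D _ => D ⊆ ⋃₀ c → ∃ I ∈ c, D ⊆ I) D hD
    (fun _ => ⟨hne.choose, hne.choose_spec, empty_subset _⟩) ?_ hDc
  intro x D hxD hDfin ih hins
  obtain ⟨I, hIc, hDI⟩ := ih ((subset_insert x D).trans hins)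
  obtain ⟨Cx, hCxc, hxCx⟩ := hins (mem_insert x D)
  rcases eq_or_ne I Cx with rfl | hne'
  · exact ⟨I, hIc, insert_subset hxCx hDI⟩
  rcases hc hIc hCxc hne' with h | h
  · exact ⟨Cx, hCxc, insert_subset hxCx (hDI.trans h)⟩
  · exact ⟨I, hIc, insert_subset (h hxCx) hDI⟩

/-- The union of a nonempty chain of stable sets is stable. -/
lemma stable_sUnion {M N : Matroid α} [M.Finitary] [N.Finitary] {c : Set (Set α)}
    (hc : IsChain (· ⊆ ·) c) (hne : c.Nonempty) (h : ∀ I ∈ c, Stable M N I) :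
    Stable M N (⋃₀ c) := by
  have hMind : M.Indep (⋃₀ c) := by
    refine indep_of_forall_finite_subset_indep _ fun D hDc hD => ?_
    obtain ⟨I, hIc, hDI⟩ := finite_subset_chain_sUnion hc hne hD hDc
    exact (h I hIc).1.subset hDI
  have hNind : N.Indep (⋃₀ c) := by
    refine indep_of_forall_finite_subset_indep _ fun D hDc hD => ?_
    obtain ⟨I, hIc, hDI⟩ := finite_subset_chain_sUnion hc hne hD hDc
    exact (h I hIc).2.1.subset hDI
  refine ⟨hMind, hNind, fun J hJ hconM hNJ => ?_⟩
  have hdisj : Disjoint J (⋃₀ c) := (subset_diff.mp hJ).2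
  have hMuJ : M.Indep (⋃₀ c ∪ J) := ((con_indep_iff_s7 hMind).mp hconM).2
  refine (con_indep_iff_s7 hNind).mpr ⟨hdisj, ?_⟩
  refine indep_of_forall_finite_subset_indep _ fun D hDc hD => ?_
  obtain ⟨I, hIc, hDI⟩ := finite_subset_chain_sUnion hc hne
    (hD.inter_of_left (⋃₀ c)) inter_subset_right
  have hJI : J ⊆ M.E \ I := hJ.trans
    (diff_subset_diff_right (subset_sUnion_of_mem hIc))
  have hind : N.Indep (I ∪ J) := (h I hIc).indep_union hJI
    (hMuJ.subset (union_subset_union_left J (subset_sUnion_of_mem hIc))) hNJ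
  refine hind.subset fun d hd => ?_
  rcases hDc hd with hdc | hdJ
  · exact Or.inl (hDI ⟨hd, hdc⟩)
  · exact Or.inr hdJ

/-- Claim B: extending a stable set `I` by a maximal `M`-independent-over-`I`
subset of another stable set `S` yields a stable set. -/
lemma stable_union_maximal {M N : Matroid α} [M.Finitary] [N.Finitary] {I S J : Set α}
    (hI : Stable M N I) (hS : Stable M N S) (hJ : J ⊆ S \ I) (hind : M.Indep (I ∪ J))
    (hmax : ∀ x ∈ S, x ∉ I ∪ J → ¬ M.Indep (insert x (I ∪ J))) :
    Stable M N (I ∪ J) := by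
  have hSE : S ⊆ M.E := hS.1.subset_ground
  have hJME : J ⊆ M.E \ I := fun x hx => ⟨hSE (hJ hx).1, (hJ hx).2⟩
  have hNIJ : N.Indep (I ∪ J) :=
    hI.indep_union hJME hind (hS.2.1.subset fun x hx => (hJ hx).1)
  refine ⟨hind, hNIJ, fun L hL hconM hNL => ?_⟩
  have hdisj : Disjoint L (I ∪ J) := (subset_diff.mp hL).2
  have hMIJL : M.Indep ((I ∪ J) ∪ L) := ((con_indep_iff_s7 hind).mp hconM).2
  have hLE : L ⊆ M.E := hL.trans diff_subset
  -- (a) `L` is disjoint from `S`.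
  have hLS : Disjoint L S := by
    rw [disjoint_left]
    intro x hxL hxS
    have hxIJ : x ∉ I ∪ J := disjoint_left.mp hdisj hxL
    exact hmax x hxS hxIJ
      (hMIJL.subset (insert_subset (Or.inr hxL) subset_union_left))
  -- (b) `S ⊆ closure (I ∪ J)`.
  have hScl : S ⊆ M.closure (I ∪ J) := by
    intro x hxS
    by_cases hxIJ : x ∈ I ∪ J
    · exact M.subset_closure (I ∪ J) hind.subset_ground hxIJ
    have hni := hmax x hxS hxIJ
    rw [hind.insert_indep_iff_of_notMem hxIJ] at hni
    simp only [mem_diff, not_and, not_not] at hni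
    exact hni (hSE hxS)
  -- (c) `M.Indep (S ∪ L)`.
  have hSL : M.Indep (S ∪ L) := by
    have key : ∀ T : Set α, T.Finite → T ⊆ L → M.Indep (S ∪ T) := by
      intro T hT
      refine Set.Finite.induction_on
        (motive := fun T _ => T ⊆ L → M.Indep (S ∪ T)) T hT (fun _ => by simpa using hS.1) ?_
      intro x T hxT hTfin ih hins
      have hTL : T ⊆ L := (subset_insert x T).trans hins
      have hxL : x ∈ L := hins (mem_insert x T)
      have ihST := ih hTL
      have hxIJT : x ∉ (I ∪ J) ∪ T := by
        rintro (h | h)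
        · exact disjoint_left.mp hdisj hxL h
        · exact hxT h
      have hIJT : M.Indep (insert x ((I ∪ J) ∪ T)) := by
        refine hMIJL.subset (insert_subset (Or.inr hxL) ?_)
        exact union_subset_union_right _ hTL
      have hIJTind : M.Indep ((I ∪ J) ∪ T) := hIJT.subset (subset_insert _ _)
      have hxcl : x ∉ M.closure ((I ∪ J) ∪ T) :=
        ((hIJTind.insert_indep_iff_of_notMem hxIJT).mp hIJT).2
      have hsub : M.closure (S ∪ T) ⊆ M.closure ((I ∪ J) ∪ T) := by
        refine M.closure_subset_closure_of_subset_closure (union_subset ?_ ?_)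
        · exact hScl.trans (M.closure_subset_closure subset_union_left)
        · intro a ha
          exact M.subset_closure ((I ∪ J) ∪ T) hIJTind.subset_ground (Or.inr ha)
      have hxST : x ∉ S ∪ T := by
        rintro (h | h)
        · exact disjoint_left.mp hLS hxL h
        · exact hxT h
      have : M.Indep (insert x (S ∪ T)) := by
        rw [ihST.insert_indep_iff_of_notMem hxST]
        exact ⟨hLE hxL, fun hmem => hxcl (hsub hmem)⟩
      simpa [union_insert] using this
    refine indep_of_forall_finite_subset_indep _ fun D hDc hD => ?_
    have := key (D ∩ L) (hD.inter_of_left L) inter_subset_right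
    refine this.subset fun d hd => ?_
    rcases hDc hd with h | h
    · exact Or.inl h
    · exact Or.inr ⟨hd, h⟩
  -- (d) `N.Indep (S ∪ L)` by stability of `S`.
  have hNSL : N.Indep (S ∪ L) :=
    hS.indep_union (fun x hx => ⟨hLE hx, disjoint_left.mp hLS hx⟩) hSL hNL
  -- (e) conclude by stability of `I` applied to `J ∪ L`.
  have hJL : J ∪ L ⊆ M.E \ I := union_subset hJME
    (hL.trans (diff_subset_diff_right subset_union_left))
  have hMassoc : M.Indep (I ∪ (J ∪ L)) := by
    rwa [← union_assoc]
  have hNJL : N.Indep (J ∪ L) :=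
    hNSL.subset (union_subset_union_left L fun x hx => (hJ hx).1)
  have hfinal : N.Indep (I ∪ (J ∪ L)) := hI.indep_union hJL hMassoc hNJL
  rw [← union_assoc] at hfinal
  exact (con_indep_iff_s7 hNIJ).mpr ⟨hdisj, hfinal⟩

/-- For every family `ℱ` of `(M,N)`-stable sets there is a single stable set
`I ⊆ ⋃ℱ` with `⋃ℱ ⊆ span_M(I)`. -/
theorem statement7 (M N : Matroid α) [M.Finitary] [N.Finitary] (hE : M.E = N.E)
    (F : Set (Set α)) (hF : ∀ S ∈ F, Stable M N S) :
    ∃ I, Stable M N I ∧ I ⊆ ⋃₀ F ∧ ⋃₀ F ⊆ M.closure I := by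
  have hch1 : ∀ c ⊆ {I | Stable M N I ∧ I ⊆ ⋃₀ F}, IsChain (· ⊆ ·) c →
      ∃ ub ∈ {I | Stable M N I ∧ I ⊆ ⋃₀ F}, ∀ s ∈ c, s ⊆ ub := by
    intro c hcsub hchain
    rcases c.eq_empty_or_nonempty with rfl | hne
    · exact ⟨∅, ⟨stable_empty M N, empty_subset _⟩, by simp⟩
    exact ⟨⋃₀ c, ⟨stable_sUnion hchain hne fun I hI => (hcsub hI).1,
      sUnion_subset fun I hI => (hcsub hI).2⟩, fun s hs => subset_sUnion_of_mem hs⟩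
  obtain ⟨I, hImax⟩ := zorn_subset _ hch1
  obtain ⟨⟨hIst, hIU⟩, hmax⟩ := hImax
  refine ⟨I, hIst, hIU, ?_⟩
  rintro x ⟨S, hSF, hxS⟩
  have hSst := hF S hSF
  -- maximal M-independent extension of I inside S
  have hch2 : ∀ c ⊆ {J | J ⊆ S \ I ∧ M.Indep (I ∪ J)}, IsChain (· ⊆ ·) c →
      ∃ ub ∈ {J | J ⊆ S \ I ∧ M.Indep (I ∪ J)}, ∀ s ∈ c, s ⊆ ub := by
    intro c hcsub hchain
    rcases c.eq_empty_or_nonempty with rfl | hne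
    · exact ⟨∅, ⟨empty_subset _, by simpa using hIst.1⟩, by simp⟩
    refine ⟨⋃₀ c, ⟨sUnion_subset fun J hJ => (hcsub hJ).1, ?_⟩,
      fun s hs => subset_sUnion_of_mem hs⟩
    refine indep_of_forall_finite_subset_indep _ fun D hDc hD => ?_
    obtain ⟨J₀, hJ₀c, hDJ₀⟩ := finite_subset_chain_sUnion hchain hne
      (hD.inter_of_left (⋃₀ c)) inter_subset_right
    refine (hcsub hJ₀c).2.subset fun d hd => ?_
    rcases hDc hd with h | h
    · exact Or.inl h
    · exact Or.inr (hDJ₀ ⟨hd, h⟩)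
  obtain ⟨J, hJmax⟩ := zorn_subset _ hch2
  obtain ⟨⟨hJsub, hJind⟩, hJmax'⟩ := hJmax
  -- elementwise maximality
  have hmaxelt : ∀ y ∈ S, y ∉ I ∪ J → ¬ M.Indep (insert y (I ∪ J)) := by
    intro y hyS hyIJ hcon
    have hyI : y ∉ I := fun h => hyIJ (Or.inl h)
    have hins : insert y J ∈ {J | J ⊆ S \ I ∧ M.Indep (I ∪ J)} := by
      refine ⟨insert_subset ⟨hyS, hyI⟩ hJsub, ?_⟩
      rw [union_insert]; exact hcon
    have := hJmax' hins (subset_insert y J)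
    exact hyIJ (Or.inr (this (mem_insert y J)))
  have hKst : Stable M N (I ∪ J) := stable_union_maximal hIst hSst hJsub hJind hmaxelt
  have hKU : I ∪ J ⊆ ⋃₀ F := union_subset hIU
    ((hJsub.trans diff_subset).trans (subset_sUnion_of_mem hSF))
  have hKI : I ∪ J ⊆ I := hmax ⟨hKst, hKU⟩ subset_union_left
  have hIJeq : I ∪ J = I := hKI.antisymm subset_union_left
  by_cases hxI : x ∈ I
  · exact M.subset_closure I hIst.1.subset_ground hxI
  have hxIJ : x ∉ I ∪ J := fun h => hxI (hKI h)
  have hni := hmaxelt x hxS hxIJ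
  rw [hIJeq] at hni
  have hxE : x ∈ M.E := hSst.1.subset_ground hxS
  rw [hIst.1.insert_indep_iff_of_notMem hxI] at hni
  simp only [mem_diff, not_and, not_not] at hni
  exact hni hxE

end AZ
end

section
/- If I is a common independent set of M and N and O ⊆ E induces a chordless directed cycle in the exchange digraph D(I) (the arcs of D(I) with both endpoints in O form a directed cycle passing through every element of O, and D(I) has no other arcs within O), then I △ O is a common independent set of M and N with span_M(I △ O) = span_M(I) and span_N(I △ O) = span_N(I). -/
open Set Matroid
open scoped symmDiff

namespace AZ

variable {α : Type*}

lemma swap_one (M : Matroid α) {I C : Set α} {x y : α} (hI : M.Indep I)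
    (hxcl : x ∈ M.closure I) (hC : Circuit M C) (hCsub : C ⊆ insert x I)
    (hyC : y ∈ C) (hyI : y ∈ I) :
    M.Indep (insert x (I \ {y})) ∧ M.closure (insert x (I \ {y})) = M.closure I := by
  have hCy : C \ {y} ⊆ insert x (I \ {y}) := by
    intro z hz
    rcases hCsub hz.1 with h | h
    · exact Or.inl h
    · exact Or.inr ⟨h, hz.2⟩
  have hCyI : M.Indep (C \ {y}) := hC.2.2 _ (sdiff_singleton_ssubset.mpr hyC)
  have hyCcl : y ∈ M.closure (C \ {y}) := by
    rw [hCyI.mem_closure_iff]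
    left
    rw [insert_diff_singleton, insert_eq_of_mem hyC]
    exact ⟨hC.2.1, hC.1⟩
  have hycl : y ∈ M.closure (insert x (I \ {y})) :=
    M.closure_subset_closure hCy hyCcl
  have hclJ : M.closure (insert x (I \ {y})) = M.closure I := by
    calc M.closure (insert x (I \ {y}))
        = M.closure (insert y (insert x (I \ {y}))) :=
          (closure_insert_eq_of_mem_closure hycl).symm
      _ = M.closure (insert x I) := by
          rw [insert_comm, insert_diff_singleton, insert_eq_of_mem hyI]
      _ = M.closure I := closure_insert_eq_of_mem_closure hxcl
  refine ⟨?_, hclJ⟩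
  have hIy : M.Indep (I \ {y}) := hI.subset diff_subset
  by_contra hdep
  have hxcl' : x ∈ M.closure (I \ {y}) := by
    rw [hIy.mem_closure_iff]
    left
    refine ⟨fun h => hdep h, ?_⟩
    exact insert_subset (M.closure_subset_ground I hxcl) (diff_subset.trans hI.subset_ground)
  have : M.closure (insert x (I \ {y})) = M.closure (I \ {y}) :=
    closure_insert_eq_of_mem_closure hxcl'
  rw [this] at hycl
  exact hI.notMem_closure_sdiff_of_mem hyI hycl

lemma swap_many (M : Matroid α) (X : Set α) (hXfin : X.Finite) :
    ∀ (I Y : Set α) (g : α → α), M.Indep I → X ∩ I = ∅ → Y ⊆ I → Set.BijOn g X Y →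
    (∀ x ∈ X, x ∈ M.closure I ∧
      ∃ C, Circuit M C ∧ C ⊆ insert x I ∧ x ∈ C ∧ C ∩ Y = {g x}) →
    M.Indep ((I \ Y) ∪ X) ∧ M.closure ((I \ Y) ∪ X) = M.closure I := by
  refine Set.Finite.induction_on X hXfin ?_ @fun a X₀ ha hfin ih => ?_
  ·
    intro I Y g hI hXI hYI hbij _
    have hY : Y = ∅ := by
      have := hbij.surjOn
      simpa [Set.SurjOn] using this
    rw [hY]; simpa using hI
  ·
    intro I Y g hI hXI hYI hbij hcond
    obtain ⟨hacl, C, hC, hCsub, haC, hCY⟩ := hcond a (mem_insert a X₀)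
    set y := g a with hy
    have hyCY : y ∈ C ∩ Y := by rw [hCY]; rfl
    have hyI : y ∈ I := hYI hyCY.2
    have haI : a ∉ I := fun h => by
      have : a ∈ (insert a X₀) ∩ I := ⟨mem_insert a X₀, h⟩
      rw [hXI] at this; exact this
    obtain ⟨hI', hcl'⟩ := swap_one M hI hacl hC hCsub hyCY.1 hyI
    set I' := insert a (I \ {y}) with hI'def
    set Y' := Y \ {y} with hY'def
    have haY : a ∉ Y := fun h => haI (hYI h)
    -- apply ih
    have hX₀I' : X₀ ∩ I' = ∅ := by
      ext z
      simp only [mem_inter_iff, mem_empty_iff_false, iff_false, hI'def, mem_insert_iff,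
        mem_diff]
      rintro ⟨hz, rfl | ⟨hzI, -⟩⟩
      · exact ha hz
      · have : z ∈ (insert a X₀) ∩ I := ⟨Or.inr hz, hzI⟩
        rw [hXI] at this; exact this
    have hY'I' : Y' ⊆ I' := fun z hz => Or.inr ⟨hYI hz.1, hz.2⟩
    have hbij' : Set.BijOn g X₀ Y' := by
      refine ⟨fun z hz => ⟨hbij.mapsTo (Or.inr hz), ?_⟩,
        fun z hz w hw h => hbij.injOn (Or.inr hz) (Or.inr hw) h, ?_⟩
      · intro h
        have := hbij.injOn (Or.inr hz) (mem_insert a X₀) h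
        exact ha (this ▸ hz)
      · intro w hw
        obtain ⟨z, hz, rfl⟩ := hbij.surjOn hw.1
        rcases hz with rfl | hz
        · exact absurd rfl hw.2
        · exact ⟨z, hz, rfl⟩
    have hcond' : ∀ x ∈ X₀, x ∈ M.closure I' ∧
        ∃ C, Circuit M C ∧ C ⊆ insert x I' ∧ x ∈ C ∧ C ∩ Y' = {g x} := by
      intro x hx
      obtain ⟨hxcl, D, hD, hDsub, hxD, hDY⟩ := hcond x (Or.inr hx)
      have hgx : g x ≠ y := fun h =>
        ha (hbij.injOn (Or.inr hx) (mem_insert a X₀) h ▸ hx)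
      have hyD : y ∉ D := fun h => hgx (by
        have : y ∈ D ∩ Y := ⟨h, hyCY.2⟩
        rw [hDY] at this
        exact this.symm)
      refine ⟨hcl' ▸ hxcl, D, hD, ?_, hxD, ?_⟩
      · intro z hz
        rcases hDsub hz with rfl | hzI
        · exact mem_insert _ _
        · exact Or.inr (Or.inr ⟨hzI, fun h => hyD (h ▸ hz)⟩)
      · rw [hY'def]
        ext z
        simp only [mem_inter_iff, mem_diff, mem_singleton_iff]
        constructor
        · rintro ⟨hzD, hzY, -⟩
          have : z ∈ D ∩ Y := ⟨hzD, hzY⟩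
          rw [hDY] at this; exact this
        · rintro rfl
          have : g x ∈ D ∩ Y := by rw [hDY]; rfl
          exact ⟨this.1, this.2, hgx⟩
    obtain ⟨hind, hclfin⟩ := ih I' Y' g hI' hX₀I' hY'I' hbij' hcond'
    have hset : (I' \ Y') ∪ X₀ = (I \ Y) ∪ insert a X₀ := by
      ext z
      simp only [hI'def, hY'def, mem_union, mem_diff, mem_insert_iff, mem_singleton_iff]
      constructor
      · rintro (⟨rfl | ⟨hzI, hzy⟩, hzY⟩ | hz)
        · exact Or.inr (Or.inl rfl)
        · exact Or.inl ⟨hzI, fun h => hzY ⟨h, hzy⟩⟩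
        · exact Or.inr (Or.inr hz)
      · rintro (⟨hzI, hzY⟩ | rfl | hz)
        · by_cases hzy : z = y
          · subst hzy; exact absurd hyCY.2 hzY
          · exact Or.inl ⟨Or.inr ⟨hzI, hzy⟩, fun h => hzY h.1⟩
        · exact Or.inl ⟨Or.inl rfl, fun h => haY h.1⟩
        · exact Or.inr hz
    rw [hset] at hind hclfin
    exact ⟨hind, hclfin.trans hcl'⟩

/-- If `O` is a switching cycle for a common independent set `I`, then `I △ O` is a
common independent set with the same `M`-span and `N`-span as `I`. -/
theorem statement10 (M N : Matroid α) [M.Finitary] [N.Finitary] (hE : M.E = N.E)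
    (I O : Set α) (hIM : M.Indep I) (hIN : N.Indep I) (hO : SwitchCycle M N I O) :
    M.Indep (I ∆ O) ∧ N.Indep (I ∆ O) ∧
      M.closure (I ∆ O) = M.closure I ∧ N.closure (I ∆ O) = N.closure I := by
  obtain ⟨n, f, hOeq, hOE, hinj, harc⟩ := hO
  set m := 2 * n + 2 with hm
  have hm2 : 2 ≤ m := by omega
  -- index arithmetic
  have hmod : ∀ i < m, (i + 1) % m = if i + 1 = m then 0 else i + 1 := by
    intro i hi
    split_ifs with h
    · simp [h, Nat.mod_self]
    · exact Nat.mod_eq_of_lt (by omega)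
  have hsucc_lt : ∀ i < m, (i + 1) % m < m := fun i _ => Nat.mod_lt _ (by omega)
  set pred : ℕ → ℕ := fun j => if j = 0 then m - 1 else j - 1 with hpred_def
  have hpred_lt : ∀ j < m, pred j < m := by
    intro j hj; simp only [hpred_def]; split <;> omega
  have hsucc_pred : ∀ j < m, (pred j + 1) % m = j := by
    intro j hj
    simp only [hpred_def]
    split_ifs with h
    · subst h; rw [hmod (m - 1) (by omega)]; simp [Nat.sub_add_cancel (by omega : 1 ≤ m)]
    · rw [hmod (j - 1) (by omega)]
      split <;> omega
  have hpred_succ : ∀ i < m, pred ((i + 1) % m) = i := by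
    intro i hi
    rw [hmod i hi]
    by_cases h : i + 1 = m
    · rw [if_pos h]
      simp only [hpred_def, if_pos rfl]
      omega
    · rw [if_neg h]
      simp only [hpred_def]
      rw [if_neg (by omega)]
      omega
  have hsucc_inj : ∀ i < m, ∀ j < m, (i + 1) % m = (j + 1) % m → i = j := by
    intro i hi j hj h
    have := hpred_succ i hi
    rw [h, hpred_succ j hj] at this
    omega
  -- inverse function
  set e : α → ℕ := Function.invFunOn f (Set.Iio m) with he_def
  have he1 : ∀ z ∈ O, e z < m ∧ f (e z) = z := by
    intro z hz
    rw [hOeq] at hz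
    exact ⟨Function.invFunOn_mem hz, Function.invFunOn_eq hz⟩
  have he2 : ∀ i < m, e (f i) = i := by
    intro i hi
    have h1 := he1 (f i) (hOeq ▸ ⟨i, hi, rfl⟩)
    exact hinj h1.1 hi h1.2
  have hmemO : ∀ i < m, f i ∈ O := fun i hi => hOeq ▸ ⟨i, hi, rfl⟩
  -- arcs along the cycle
  have harc_succ : ∀ i < m, Arc M N I (f i) (f ((i + 1) % m)) := fun i hi =>
    (harc i hi _ (hsucc_lt i hi)).mpr rfl
  have hout : ∀ i < m, f i ∉ I → f i ∈ M.closure I ∧ f ((i + 1) % m) ∈ I ∧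
      ∃ C, Circuit M C ∧ C ⊆ insert (f i) I ∧ f i ∈ C ∧ f ((i + 1) % m) ∈ C := by
    intro i hi hfi
    rcases harc_succ i hi with ⟨-, h2, h3, C, hC⟩ | ⟨h1, -⟩
    · exact ⟨h3, h2, C, hC⟩
    · exact absurd h1 hfi
  have hin : ∀ i < m, f i ∈ I → f ((i + 1) % m) ∉ I ∧ f ((i + 1) % m) ∈ N.closure I ∧
      ∃ C, Circuit N C ∧ C ⊆ insert (f ((i + 1) % m)) I ∧
        f ((i + 1) % m) ∈ C ∧ f i ∈ C := by
    intro i hi hfi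
    rcases harc_succ i hi with ⟨h1, -⟩ | ⟨-, h2, h3, C, hC⟩
    · exact absurd hfi h1.2
    · exact ⟨h2.2, h3, C, hC⟩
  set X := O \ I with hX_def
  set Y := O ∩ I with hY_def
  have hXfin : X.Finite := ((Set.finite_Iio m).image f).subset
    (by rw [← hOeq]; exact diff_subset)
  have hXI : X ∩ I = ∅ := Set.diff_inter_self
  have hYI : Y ⊆ I := inter_subset_right
  set gM : α → α := fun z => f ((e z + 1) % m) with hgM_def
  set gN : α → α := fun z => f (pred (e z)) with hgN_def
  -- membership characterizations
  have hXmem : ∀ z ∈ X, e z < m ∧ f (e z) = z ∧ z ∉ I := by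
    intro z hz
    obtain ⟨h1, h2⟩ := he1 z hz.1
    exact ⟨h1, h2, hz.2⟩
  -- BijOn gM X Y
  have hbijM : Set.BijOn gM X Y := by
    refine ⟨?_, ?_, ?_⟩
    · intro z hz
      obtain ⟨hlt, hfz, hzI⟩ := hXmem z hz
      have := hout (e z) hlt (by rw [hfz]; exact hzI)
      exact ⟨hmemO _ (hsucc_lt _ hlt), this.2.1⟩
    · intro z hz w hw h
      obtain ⟨hlz, hfz, -⟩ := hXmem z hz
      obtain ⟨hlw, hfw, -⟩ := hXmem w hw
      have := hinj (hsucc_lt _ hlz) (hsucc_lt _ hlw) h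
      have := hsucc_inj _ hlz _ hlw this
      rw [← hfz, ← hfw, this]
    · intro y hy
      obtain ⟨hlt, hfy⟩ := he1 y hy.1
      have hyI : y ∈ I := hy.2
      set j := e y
      have hpj := hpred_lt j hlt
      have hne : f (pred j) ∉ I := by
        intro hmem
        have := (hin (pred j) hpj hmem).1
        rw [hsucc_pred j hlt, hfy] at this
        exact this hyI
      refine ⟨f (pred j), ⟨hmemO _ hpj, hne⟩, ?_⟩
      simp only [hgM_def]
      rw [he2 _ hpj, hsucc_pred j hlt, hfy]
  -- BijOn gN X Y
  have hbijN : Set.BijOn gN X Y := by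
    refine ⟨?_, ?_, ?_⟩
    · intro z hz
      obtain ⟨hlt, hfz, hzI⟩ := hXmem z hz
      have hpj := hpred_lt _ hlt
      have : f (pred (e z)) ∈ I := by
        by_contra hmem
        have := (hout (pred (e z)) hpj hmem).2.1
        rw [hsucc_pred _ hlt, hfz] at this
        exact hzI this
      exact ⟨hmemO _ hpj, this⟩
    · intro z hz w hw h
      obtain ⟨hlz, hfz, -⟩ := hXmem z hz
      obtain ⟨hlw, hfw, -⟩ := hXmem w hw
      have h1 := hinj (hpred_lt _ hlz) (hpred_lt _ hlw) h
      have : (pred (e z) + 1) % m = (pred (e w) + 1) % m := by rw [h1]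
      rw [hsucc_pred _ hlz, hsucc_pred _ hlw] at this
      rw [← hfz, ← hfw, this]
    · intro y hy
      obtain ⟨hlt, hfy⟩ := he1 y hy.1
      have hyI : y ∈ I := hy.2
      set k := e y
      have hsk := hsucc_lt k hlt
      have hne : f ((k + 1) % m) ∉ I := (hin k hlt (by rw [hfy]; exact hyI)).1
      refine ⟨f ((k + 1) % m), ⟨hmemO _ hsk, hne⟩, ?_⟩
      simp only [hgN_def]
      rw [he2 _ hsk, hpred_succ k hlt, hfy]
  -- circuit conditions
  have hcondM : ∀ x ∈ X, x ∈ M.closure I ∧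
      ∃ C, Circuit M C ∧ C ⊆ insert x I ∧ x ∈ C ∧ C ∩ Y = {gM x} := by
    intro x hx
    obtain ⟨hlt, hfx, hxI⟩ := hXmem x hx
    obtain ⟨hcl, hsuccI, C, hC, hCsub, hxC, hsC⟩ := hout (e x) hlt (by rw [hfx]; exact hxI)
    rw [hfx] at hcl hCsub hxC
    refine ⟨hcl, C, hC, hCsub, hxC, ?_⟩
    ext z
    simp only [mem_inter_iff, mem_singleton_iff, hgM_def]
    constructor
    · rintro ⟨hzC, hzO, hzI⟩
      obtain ⟨hlz, hfz⟩ := he1 z hzO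
      have harc2 : Arc M N I (f (e x)) (f (e z)) := by
        left
        rw [hfx, hfz]
        exact ⟨⟨hOE hx.1, hxI⟩, hzI, hcl, C, hC, hCsub, hxC, hzC⟩
      have := (harc (e x) hlt (e z) hlz).mp harc2
      rw [← hfz, this]
    · rintro rfl
      exact ⟨hsC, hmemO _ (hsucc_lt _ hlt), hsuccI⟩
  have hcondN : ∀ x ∈ X, x ∈ N.closure I ∧
      ∃ C, Circuit N C ∧ C ⊆ insert x I ∧ x ∈ C ∧ C ∩ Y = {gN x} := by
    intro x hx
    obtain ⟨hlt, hfx, hxI⟩ := hXmem x hx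
    have hpj := hpred_lt _ hlt
    have hpredI : f (pred (e x)) ∈ I := by
      by_contra hmem
      have := (hout (pred (e x)) hpj hmem).2.1
      rw [hsucc_pred _ hlt, hfx] at this
      exact hxI this
    obtain ⟨-, hcl, C, hC, hCsub, hxC, hpC⟩ := hin (pred (e x)) hpj hpredI
    rw [hsucc_pred _ hlt, hfx] at hcl hCsub hxC
    refine ⟨hcl, C, hC, hCsub, hxC, ?_⟩
    ext z
    simp only [mem_inter_iff, mem_singleton_iff, hgN_def]
    constructor
    · rintro ⟨hzC, hzO, hzI⟩
      obtain ⟨hlz, hfz⟩ := he1 z hzO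
      have harc2 : Arc M N I (f (e z)) (f (e x)) := by
        right
        rw [hfx, hfz]
        exact ⟨hzI, ⟨hOE hx.1, hxI⟩, hcl, C, hC, hCsub, hxC, hzC⟩
      have h1 := (harc (e z) hlz (e x) hlt).mp harc2
      have : pred (e x) = e z := by rw [h1, hpred_succ _ hlz]
      rw [← this] at hfz
      rw [← hfz]
    · rintro rfl
      exact ⟨hpC, hmemO _ hpj, hpredI⟩
  -- conclude
  have hset : I ∆ O = (I \ Y) ∪ X := by
    rw [Set.symmDiff_def]
    ext z
    simp only [hX_def, hY_def, mem_union, mem_diff, mem_inter_iff, sup_eq_union, mem_union]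
    tauto
  obtain ⟨hM1, hM2⟩ := swap_many M X hXfin I Y gM hIM hXI hYI hbijM hcondM
  obtain ⟨hN1, hN2⟩ := swap_many N X hXfin I Y gN hIN hXI hYI hbijN hcondN
  rw [hset]
  exact ⟨hM1, hN1, hM2, hN2⟩

end AZ
end

section
/- For finite common independent sets I and J of M and N: I ∼ J if and only if there exist finite common independent sets I_0, …, I_n with I_0 = I, I_n = J such that for every i < n, I_{i+1} = I_i △ O_i for some switching cycle O_i for I_i. -/
open Set Matroid
open scoped symmDiff

namespace AZ

variable {α : Type*}

lemma circuit_mem_closure_diff {M : Matroid α} {C : Set α} {y : α}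
    (hC : Circuit M C) (hy : y ∈ C) : y ∈ M.closure (C \ {y}) := by
  have hind : M.Indep (C \ {y}) := hC.2.2 _ (sdiff_singleton_ssubset.2 hy)
  by_contra h
  have : M.Indep (insert y (C \ {y})) := by
    rw [hind.insert_indep_iff_of_notMem (by simp)]
    exact ⟨hC.1 hy, h⟩
  rw [insert_diff_singleton, insert_eq_of_mem hy] at this
  exact hC.2.1 this

lemma fund_circuit_char {M : Matroid α} {I C : Set α} {x : α}
    (hI : M.Indep I) (hxI : x ∉ I)
    (hC : Circuit M C) (hCss : C ⊆ insert x I) (hxC : x ∈ C) :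
    ∀ y, y ∈ C ↔ y = x ∨ (y ∈ I ∧ x ∉ M.closure (I \ {y})) := by
  intro y
  constructor
  · intro hyC
    rcases eq_or_ne y x with rfl | hne
    · exact Or.inl rfl
    have hyI : y ∈ I := by
      rcases hCss hyC with h | h
      exacts [absurd h hne, h]
    refine Or.inr ⟨hyI, fun hxcl => ?_⟩
    have h1 : y ∈ M.closure (C \ {y}) := circuit_mem_closure_diff hC hyC
    have h2 : C \ {y} ⊆ insert x (I \ {y}) := by
      intro z hz
      rcases hCss hz.1 with h | h
      · exact h ▸ mem_insert _ _
      · exact mem_insert_of_mem _ ⟨h, hz.2⟩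
    have h3 : insert x (I \ {y}) ⊆ M.closure (I \ {y}) := by
      refine insert_subset hxcl (M.subset_closure _ ?_)
      exact diff_subset.trans hI.subset_ground
    have h4 : y ∈ M.closure (I \ {y}) := by
      have := (M.closure_subset_closure h2).trans
        (M.closure_subset_closure_of_subset_closure h3)
      exact this h1
    exact hI.notMem_closure_diff_of_mem hyI h4
  · rintro (rfl | ⟨hyI, hxcl⟩)
    · exact hxC
    by_contra hyC
    have h2 : C \ {x} ⊆ I \ {y} := by
      intro z hz
      rcases hCss hz.1 with h | h
      · exact absurd h hz.2
      · exact ⟨h, fun h' => hyC (h' ▸ hz.1)⟩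
    have h1 : x ∈ M.closure (C \ {x}) := circuit_mem_closure_diff hC hxC
    exact hxcl ((M.closure_subset_closure h2) h1)

lemma fund_circuit_unique {M : Matroid α} {I C₁ C₂ : Set α} {x : α}
    (hI : M.Indep I) (hxI : x ∉ I)
    (hC₁ : Circuit M C₁) (hss₁ : C₁ ⊆ insert x I) (hx₁ : x ∈ C₁)
    (hC₂ : Circuit M C₂) (hss₂ : C₂ ⊆ insert x I) (hx₂ : x ∈ C₂) : C₁ = C₂ := by
  ext y
  rw [fund_circuit_char hI hxI hC₁ hss₁ hx₁ y, fund_circuit_char hI hxI hC₂ hss₂ hx₂ y]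

lemma exists_circuit_subset {M : Matroid α} {S : Set α}
    (hfin : S.Finite) (hSE : S ⊆ M.E) (hdep : ¬ M.Indep S) :
    ∃ C ⊆ S, Circuit M C := by
  generalize hn : S.ncard = n
  induction n using Nat.strong_induction_on generalizing S with
  | _ n IH =>
  by_cases h : ∀ D ⊂ S, M.Indep D
  · exact ⟨S, subset_rfl, hSE, hdep, h⟩
  push_neg at h
  obtain ⟨D, hDS, hDdep⟩ := h
  obtain ⟨C, hCD, hC⟩ := IH D.ncard (hn ▸ Set.ncard_lt_ncard hDS hfin)
    (hfin.subset hDS.subset) (hDS.subset.trans hSE) hDdep rfl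
  exact ⟨C, hCD.trans hDS.subset, hC⟩

lemma exists_fund_circuit {M : Matroid α} {I : Set α} {x : α}
    (hI : M.Indep I) (hIfin : I.Finite) (hx : x ∈ M.closure I) (hxI : x ∉ I) :
    ∃ C, Circuit M C ∧ C ⊆ insert x I ∧ x ∈ C := by
  have hdep : ¬ M.Indep (insert x I) := by
    rw [hI.insert_indep_iff_of_notMem hxI]
    simp [hx]
  have hE : insert x I ⊆ M.E :=
    insert_subset (M.closure_subset_ground I hx) hI.subset_ground
  obtain ⟨C, hCS, hC⟩ := exists_circuit_subset (hIfin.insert x) hE hdep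
  refine ⟨C, hC, hCS, ?_⟩
  by_contra hxC
  exact hC.2.1 (hI.subset fun z hz => (hCS hz).resolve_left (fun h => hxC (h ▸ hz)))

lemma exch_indep {M : Matroid α} {I C : Set α} {x y : α}
    (hI : M.Indep I) (hx : x ∈ M.closure I) (hxI : x ∉ I)
    (hC : Circuit M C) (hCss : C ⊆ insert x I) (hxC : x ∈ C)
    (hyC : y ∈ C) (hyI : y ∈ I) : M.Indep (insert x (I \ {y})) := by
  have hxcl : x ∉ M.closure (I \ {y}) := by
    have := (fund_circuit_char hI hxI hC hCss hxC y).1 hyC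
    rcases this with rfl | ⟨_, h⟩
    · exact absurd hyI hxI
    · exact h
  have hind : M.Indep (I \ {y}) := hI.subset diff_subset
  rw [hind.insert_indep_iff_of_notMem (fun h => hxI h.1)]
  exact ⟨M.closure_subset_ground I hx, hxcl⟩

lemma exch_closure {M : Matroid α} {I C : Set α} {x y : α}
    (hI : M.Indep I) (hx : x ∈ M.closure I) (hxI : x ∉ I)
    (hC : Circuit M C) (hCss : C ⊆ insert x I) (hxC : x ∈ C)
    (hyC : y ∈ C) (hyI : y ∈ I) :
    M.closure (insert x (I \ {y})) = M.closure I := by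
  apply subset_antisymm
  · apply M.closure_subset_closure_of_subset_closure
    exact insert_subset hx ((M.subset_closure _ (diff_subset.trans hI.subset_ground)).trans
      (M.closure_subset_closure diff_subset))
  · apply M.closure_subset_closure_of_subset_closure
    intro z hz
    rcases eq_or_ne z y with rfl | hne
    · have h1 : z ∈ M.closure (C \ {z}) := circuit_mem_closure_diff hC hyC
      have h2 : C \ {z} ⊆ insert x (I \ {z}) := by
        intro w hw
        rcases hCss hw.1 with h | h
        · exact h ▸ mem_insert _ _
        · exact mem_insert_of_mem _ ⟨h, hw.2⟩
      exact M.closure_subset_closure h2 h1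
    · exact M.subset_closure _ (insert_subset (M.closure_subset_ground I hx)
        (diff_subset.trans hI.subset_ground)) (mem_insert_of_mem _ ⟨hz, hne⟩)

lemma lemA {M : Matroid α} : ∀ n {I X Y : Set α} {σ : α → α}, X.ncard = n →
    M.Indep I → I.Finite → X.Finite →
    (∀ x ∈ X, x ∉ I) → X ⊆ M.closure I → Y ⊆ I →
    (∀ x ∈ X, σ x ∈ Y) → Set.InjOn σ X → Y ⊆ σ '' X →
    (∀ x ∈ X, ∀ C, Circuit M C → C ⊆ insert x I → x ∈ C →
      ∀ y ∈ Y, (y ∈ C ↔ y = σ x)) →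
    M.Indep ((I \ Y) ∪ X) ∧ M.closure ((I \ Y) ∪ X) = M.closure I := by
  intro n
  induction n using Nat.strong_induction_on with
  | _ n IH =>
  intro I X Y σ hn hI hIfin hXfin hXI hXcl hYI hmaps hinj hsurj hcct
  rcases eq_empty_or_nonempty X with rfl | ⟨x0, hx0X⟩
  · have hY : Y = ∅ := subset_empty_iff.1 (by simpa using hsurj)
    subst hY
    refine ⟨by simpa using hI, by simp⟩
  have hx0I : x0 ∉ I := hXI x0 hx0X
  have hx0cl : x0 ∈ M.closure I := hXcl hx0X
  obtain ⟨C0, hC0, hC0ss, hx0C0⟩ := exists_fund_circuit hI hIfin hx0cl hx0I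
  set y0 := σ x0 with hy0
  have hy0Y : y0 ∈ Y := hmaps x0 hx0X
  have hy0I : y0 ∈ I := hYI hy0Y
  have hy0C0 : y0 ∈ C0 := (hcct x0 hx0X C0 hC0 hC0ss hx0C0 y0 hy0Y).2 rfl
  set I1 := insert x0 (I \ {y0}) with hI1def
  have hI1 : M.Indep I1 := exch_indep hI hx0cl hx0I hC0 hC0ss hx0C0 hy0C0 hy0I
  have hcl1 : M.closure I1 = M.closure I :=
    exch_closure hI hx0cl hx0I hC0 hC0ss hx0C0 hy0C0 hy0I
  set X1 := X \ {x0} with hX1def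
  set Y1 := Y \ {y0} with hY1def
  have hX1I1 : ∀ x ∈ X1, x ∉ I1 := by
    rintro x ⟨hxX, hxne⟩ h
    rcases mem_insert_iff.1 h with h | h
    · exact hxne h
    · exact hXI x hxX h.1
  have hkey : ∀ x ∈ X1, ∀ C, Circuit M C → C ⊆ insert x I1 → x ∈ C →
      ∀ y ∈ Y1, (y ∈ C ↔ y = σ x) := by
    rintro x ⟨hxX, hxne⟩ C hC hCss hxC
    obtain ⟨Cx, hCx, hCxss, hxCx⟩ :=
      exists_fund_circuit hI hIfin (hXcl hxX) (hXI x hxX)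
    have hy0Cx : y0 ∉ Cx := by
      intro h
      have := (hcct x hxX Cx hCx hCxss hxCx y0 hy0Y).1 h
      exact hxne (hinj hxX hx0X this.symm)
    have hCxss1 : Cx ⊆ insert x I1 := by
      intro z hz
      rcases hCxss hz with rfl | hzI
      · exact mem_insert _ _
      · exact mem_insert_of_mem _ (mem_insert_of_mem _
          ⟨hzI, fun h => hy0Cx (h ▸ hz)⟩)
    have hCeq : C = Cx := fund_circuit_unique hI1 (hX1I1 x ⟨hxX, hxne⟩)
      hC hCss hxC hCx hCxss1 hxCx
    subst hCeq
    intro y hyY1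
    exact hcct x hxX C hCx hCxss hxCx y hyY1.1
  have hncard : X1.ncard < n := hn ▸ Set.ncard_diff_singleton_lt_of_mem hx0X hXfin
  obtain ⟨hind, hcl⟩ := IH X1.ncard hncard rfl hI1 (hIfin.diff.insert x0)
    (hXfin.subset diff_subset) hX1I1
    (by rw [hcl1]; exact diff_subset.trans hXcl)
    (fun y hy => mem_insert_of_mem _ ⟨hYI hy.1, hy.2⟩)
    (by rintro x ⟨hx1, hx2⟩; exact ⟨hmaps x hx1, fun h => hx2 (hinj hx1 hx0X h)⟩)
    (hinj.mono diff_subset)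
    (by
      rintro y ⟨hyY, hyne⟩
      obtain ⟨x, hxX, rfl⟩ := hsurj hyY
      exact ⟨x, ⟨hxX, fun h => hyne (h ▸ rfl)⟩, rfl⟩)
    hkey
  have hsets : (I1 \ Y1) ∪ X1 = (I \ Y) ∪ X := by
    have hx0Y : x0 ∉ Y := fun h => hx0I (hYI h)
    ext z
    simp only [hI1def, hX1def, hY1def, mem_union, mem_diff, mem_insert_iff,
      mem_singleton_iff]
    constructor
    · rintro (⟨(rfl | ⟨hzI, hzy0⟩), hz2⟩ | ⟨hzX, _⟩)
      · exact Or.inr hx0X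
      · exact Or.inl ⟨hzI, fun hzY => hz2 ⟨hzY, hzy0⟩⟩
      · exact Or.inr hzX
    · rintro (⟨hzI, hzY⟩ | hzX)
      · exact Or.inl ⟨Or.inr ⟨hzI, fun h => hzY (h ▸ hy0Y)⟩, fun h => hzY h.1⟩
      · rcases eq_or_ne z x0 with rfl | hne
        · exact Or.inl ⟨Or.inl rfl, fun h => hx0Y h.1⟩
        · exact Or.inr ⟨hzX, hne⟩
  rw [hsets] at hind hcl
  rw [hcl1] at hcl
  exact ⟨hind, hcl⟩


lemma mod_succ_lt {L i : ℕ} (hL : 0 < L) : (i + 1) % L < L := Nat.mod_lt _ hL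

lemma mod_pred_lt {L j : ℕ} (hL : 0 < L) : (j + L - 1) % L < L := Nat.mod_lt _ hL

lemma mod_pred_succ {L j : ℕ} (hj : j < L) : ((j + L - 1) % L + 1) % L = j := by
  rcases Nat.eq_zero_or_pos j with rfl | hjpos
  · have h0 : (0 + L - 1) % L = L - 1 := by
      rw [Nat.zero_add, Nat.mod_eq_of_lt (by omega)]
    rw [h0, show L - 1 + 1 = L by omega, Nat.mod_self]
  · rw [show j + L - 1 = (j - 1) + L by omega, Nat.add_mod_right,
      Nat.mod_eq_of_lt (show j - 1 < L by omega), show j - 1 + 1 = j by omega,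
      Nat.mod_eq_of_lt hj]

lemma mod_succ_pred {L i : ℕ} (hi : i < L) : ((i + 1) % L + L - 1) % L = i := by
  rcases eq_or_ne (i + 1) L with h | h
  · rw [h, Nat.mod_self, Nat.zero_add, Nat.mod_eq_of_lt (by omega)]
    omega
  · rw [Nat.mod_eq_of_lt (show i + 1 < L by omega), show i + 1 + L - 1 = i + L by omega,
      Nat.add_mod_right, Nat.mod_eq_of_lt hi]

lemma switch_core {M N : Matroid α} {I : Set α} {L : ℕ} {f : ℕ → α}
    (hIM : M.Indep I) (hIN : N.Indep I) (hIfin : I.Finite)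
    (hL : 0 < L)
    (hfE : ∀ i < L, f i ∈ M.E)
    (hinj : Set.InjOn f (Set.Iio L))
    (harc : ∀ i < L, ∀ j < L, (Arc M N I (f i) (f j) ↔ j = (i + 1) % L)) :
    M.Indep (I ∆ (f '' Set.Iio L)) ∧ N.Indep (I ∆ (f '' Set.Iio L)) ∧
    M.closure (I ∆ (f '' Set.Iio L)) = M.closure I ∧
    N.closure (I ∆ (f '' Set.Iio L)) = N.closure I := by
  have hne : Nonempty α := ⟨f 0⟩
  set O := f '' Set.Iio L with hOdef
  set X := O \ I with hXdef
  set Y := O ∩ I with hYdef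
  set idx := Function.invFunOn f (Set.Iio L) with hidxdef
  have hidx : ∀ i < L, idx (f i) = i := fun i hi => hinj.leftInvOn_invFunOn hi
  have arcs : ∀ i < L, Arc M N I (f i) (f ((i + 1) % L)) :=
    fun i hi => (harc i hi _ (mod_succ_lt hL)).2 rfl
  have halt : ∀ i < L, (f ((i + 1) % L) ∈ I ↔ f i ∉ I) := by
    intro i hi
    rcases arcs i hi with ⟨⟨_, h1⟩, h2, _⟩ | ⟨h1, ⟨_, h2⟩, _⟩
    · exact ⟨fun _ => h1, fun _ => h2⟩
    · exact ⟨fun h => absurd h h2, fun h => absurd h1 h⟩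
  have outArc : ∀ i < L, f i ∉ I → f i ∈ M.closure I ∧ f ((i + 1) % L) ∈ I ∧
      ∃ C, Circuit M C ∧ C ⊆ insert (f i) I ∧ f i ∈ C ∧ f ((i + 1) % L) ∈ C := by
    intro i hi hfiI
    rcases arcs i hi with ⟨_, h2, h3, hC⟩ | ⟨h1, _, _⟩
    · exact ⟨h3, h2, hC⟩
    · exact absurd h1 hfiI
  have inArc : ∀ i < L, f i ∉ I → f ((i + L - 1) % L) ∈ I ∧ f i ∈ N.closure I ∧
      ∃ C, Circuit N C ∧ C ⊆ insert (f i) I ∧ f i ∈ C ∧ f ((i + L - 1) % L) ∈ C := by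
    intro i hi hfiI
    have := arcs ((i + L - 1) % L) (mod_pred_lt hL)
    rw [mod_pred_succ hi] at this
    rcases this with ⟨_, h2, _⟩ | ⟨h1, _, h3, hC⟩
    · exact absurd h2 hfiI
    · exact ⟨h1, h3, hC⟩
  have hXmem : ∀ x ∈ X, ∃ i, i < L ∧ f i = x ∧ f i ∉ I := by
    rintro x ⟨⟨i, hi, rfl⟩, hxI⟩
    exact ⟨i, hi, rfl, hxI⟩
  have hOfin : O.Finite := (Set.finite_Iio L).image f
  have hXfin : X.Finite := hOfin.diff
  have hYI : Y ⊆ I := inter_subset_right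
  -- the M-side bijection
  set σM : α → α := fun v => f ((idx v + 1) % L) with hσMdef
  set σN : α → α := fun v => f ((idx v + L - 1) % L) with hσNdef
  have hσM : ∀ i < L, σM (f i) = f ((i + 1) % L) := by
    intro i hi; simp only [hσMdef]; rw [hidx i hi]
  have hσN : ∀ i < L, σN (f i) = f ((i + L - 1) % L) := by
    intro i hi; simp only [hσNdef]; rw [hidx i hi]
  have hXI : ∀ x ∈ X, x ∉ I := fun x hx => hx.2
  have hXclM : X ⊆ M.closure I := by
    intro x hx
    obtain ⟨i, hi, rfl, hfiI⟩ := hXmem x hx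
    exact (outArc i hi hfiI).1
  have hXclN : X ⊆ N.closure I := by
    intro x hx
    obtain ⟨i, hi, rfl, hfiI⟩ := hXmem x hx
    exact (inArc i hi hfiI).2.1
  have hmapsM : ∀ x ∈ X, σM x ∈ Y := by
    intro x hx
    obtain ⟨i, hi, rfl, hfiI⟩ := hXmem x hx
    rw [hσM i hi]
    exact ⟨⟨_, mod_succ_lt hL, rfl⟩, (outArc i hi hfiI).2.1⟩
  have hmapsN : ∀ x ∈ X, σN x ∈ Y := by
    intro x hx
    obtain ⟨i, hi, rfl, hfiI⟩ := hXmem x hx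
    rw [hσN i hi]
    exact ⟨⟨_, mod_pred_lt hL, rfl⟩, (inArc i hi hfiI).1⟩
  have hinjM : Set.InjOn σM X := by
    intro x hx y hy hxy
    obtain ⟨i, hi, rfl, _⟩ := hXmem x hx
    obtain ⟨j, hj, rfl, _⟩ := hXmem y hy
    rw [hσM i hi, hσM j hj] at hxy
    have h1 : (i + 1) % L = (j + 1) % L :=
      hinj (mod_succ_lt hL) (mod_succ_lt hL) hxy
    have h2 : i = j := by
      have := mod_succ_pred hi
      rw [h1, mod_succ_pred hj] at this
      exact this.symm
    rw [h2]
  have hinjN : Set.InjOn σN X := by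
    intro x hx y hy hxy
    obtain ⟨i, hi, rfl, _⟩ := hXmem x hx
    obtain ⟨j, hj, rfl, _⟩ := hXmem y hy
    rw [hσN i hi, hσN j hj] at hxy
    have h1 : (i + L - 1) % L = (j + L - 1) % L :=
      hinj (mod_pred_lt hL) (mod_pred_lt hL) hxy
    have h2 : i = j := by
      have := mod_pred_succ hi
      rw [h1, mod_pred_succ hj] at this
      exact this.symm
    rw [h2]
  have hsurjM : Y ⊆ σM '' X := by
    rintro y ⟨⟨j, hj, rfl⟩, hyI⟩
    set p := (j + L - 1) % L with hpdef
    have hp : p < L := mod_pred_lt hL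
    have hps : (p + 1) % L = j := mod_pred_succ hj
    have hfpI : f p ∉ I := by
      have := halt p hp
      rw [hps] at this
      exact this.1 hyI
    refine ⟨f p, ⟨⟨p, hp, rfl⟩, hfpI⟩, ?_⟩
    rw [hσM p hp, hps]
  have hsurjN : Y ⊆ σN '' X := by
    rintro y ⟨⟨j, hj, rfl⟩, hyI⟩
    set s := (j + 1) % L with hsdef
    have hs : s < L := mod_succ_lt hL
    have hsp : (s + L - 1) % L = j := mod_succ_pred hj
    have hfsI : f s ∉ I := by
      by_contra h
      exact ((halt j hj).1 h) hyI
    refine ⟨f s, ⟨⟨s, hs, rfl⟩, hfsI⟩, ?_⟩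
    rw [hσN s hs, hsp]
  have hcctM : ∀ x ∈ X, ∀ C, Circuit M C → C ⊆ insert x I → x ∈ C →
      ∀ y ∈ Y, (y ∈ C ↔ y = σM x) := by
    intro x hx C hC hss hxC y hy
    obtain ⟨i, hi, rfl, hfiI⟩ := hXmem x hx
    obtain ⟨⟨j, hj, rfl⟩, hyI⟩ := hy
    rw [hσM i hi]
    constructor
    · intro hyC
      have harcxy : Arc M N I (f i) (f j) :=
        Or.inl ⟨⟨hfE i hi, hfiI⟩, hyI, (outArc i hi hfiI).1, C, hC, hss, hxC, hyC⟩
      rw [(harc i hi j hj).1 harcxy]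
    · intro h
      obtain ⟨C', hC', hss', hxC', hsC'⟩ := (outArc i hi hfiI).2.2
      rw [fund_circuit_unique hIM hfiI hC hss hxC hC' hss' hxC']
      rw [h]
      exact hsC'
  have hcctN : ∀ x ∈ X, ∀ C, Circuit N C → C ⊆ insert x I → x ∈ C →
      ∀ y ∈ Y, (y ∈ C ↔ y = σN x) := by
    intro x hx C hC hss hxC y hy
    obtain ⟨i, hi, rfl, hfiI⟩ := hXmem x hx
    obtain ⟨⟨j, hj, rfl⟩, hyI⟩ := hy
    rw [hσN i hi]
    constructor
    · intro hyC
      have harcyx : Arc M N I (f j) (f i) :=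
        Or.inr ⟨hyI, ⟨hfE i hi, hfiI⟩, (inArc i hi hfiI).2.1, C, hC, hss, hxC, hyC⟩
      have hij : i = (j + 1) % L := (harc j hj i hi).1 harcyx
      rw [hij, mod_succ_pred hj]
    · intro h
      obtain ⟨C', hC', hss', hxC', hpC'⟩ := (inArc i hi hfiI).2.2
      rw [fund_circuit_unique hIN hfiI hC hss hxC hC' hss' hxC']
      rw [h]
      exact hpC'
  obtain ⟨hindM, hclM⟩ := lemA (M := M) X.ncard rfl hIM hIfin hXfin hXI hXclM hYI
    hmapsM hinjM hsurjM hcctM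
  obtain ⟨hindN, hclN⟩ := lemA (M := N) X.ncard rfl hIN hIfin hXfin hXI hXclN hYI
    hmapsN hinjN hsurjN hcctN
  have hsets : I ∆ O = (I \ Y) ∪ X := by
    rw [Set.symmDiff_def]
    ext z
    simp only [hXdef, hYdef, mem_union, mem_diff, mem_inter_iff]
    tauto
  rw [hsets]
  exact ⟨hindM, hindN, hclM, hclN⟩




lemma switchCycle_step {M N : Matroid α} {I O : Set α}
    (hIM : M.Indep I) (hIN : N.Indep I) (hIfin : I.Finite)
    (hSC : SwitchCycle M N I O) :
    M.Indep (I ∆ O) ∧ N.Indep (I ∆ O) ∧ (I ∆ O).Finite ∧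
    M.closure (I ∆ O) = M.closure I ∧ N.closure (I ∆ O) = N.closure I := by
  obtain ⟨n, f, hO, hOE, hinj, harc⟩ := hSC
  have hfE : ∀ i < 2 * n + 2, f i ∈ M.E := fun i hi => hOE (hO ▸ ⟨i, hi, rfl⟩)
  obtain ⟨h1, h2, h3, h4⟩ := switch_core hIM hIN hIfin (by omega) hfE hinj harc
  rw [hO]
  have hfin : (I ∆ (f '' Set.Iio (2 * n + 2))).Finite := by
    apply Set.Finite.subset (hIfin.union ((Set.finite_Iio _).image f))
    intro z hz
    rcases hz with h | h
    · exact Or.inl h.1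
    · exact Or.inr h.1
  exact ⟨h1, h2, hfin, h3, h4⟩

lemma arc_alt {M N : Matroid α} {I : Set α} {u v : α} (h : Arc M N I u v) :
    (u ∉ I ∧ v ∈ I) ∨ (u ∈ I ∧ v ∉ I) := by
  rcases h with ⟨⟨_, h1⟩, h2, _⟩ | ⟨h1, ⟨_, h2⟩, _⟩
  · exact Or.inl ⟨h1, h2⟩
  · exact Or.inr ⟨h1, h2⟩

lemma arc_ne {M N : Matroid α} {I : Set α} {u v : α} (h : Arc M N I u v) : u ≠ v := by
  rintro rfl
  rcases arc_alt h with ⟨h1, h2⟩ | ⟨h1, h2⟩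
  exacts [h1 h2, h2 h1]

lemma exists_out_arc {M N : Matroid α} (hE : M.E = N.E) {I J : Set α}
    (hIM : M.Indep I) (hIN : N.Indep I) (hIfin : I.Finite)
    (hJM : M.Indep J) (hJN : N.Indep J)
    (hclM : M.closure I = M.closure J) (hclN : N.closure I = N.closure J) :
    ∀ v ∈ I ∆ J, ∃ w ∈ I ∆ J, Arc M N I v w := by
  intro v hv
  rcases hv with ⟨hvI, hvJ⟩ | ⟨hvJ, hvI⟩
  · -- v ∈ I \ J : find an N-arc out of v
    by_contra hcon
    push_neg at hcon
    have hkey : ∀ x ∈ J, x ∈ N.closure (I \ {v}) := by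
      intro x hxJ
      by_cases hxI : x ∈ I
      · exact N.subset_closure _ (diff_subset.trans hIN.subset_ground)
          ⟨hxI, fun h => hvJ (h ▸ hxJ)⟩
      · have hxcl : x ∈ N.closure I := by
          rw [hclN]; exact N.subset_closure _ hJN.subset_ground hxJ
        obtain ⟨C, hC, hss, hxC⟩ := exists_fund_circuit hIN hIfin hxcl hxI
        have hvC : v ∉ C := by
          intro hvC
          have harc : Arc M N I v x :=
            Or.inr ⟨hvI, ⟨hE ▸ hJN.subset_ground hxJ, hxI⟩, hxcl, C, hC, hss, hxC, hvC⟩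
          exact hcon x (Or.inr ⟨hxJ, hxI⟩) harc
        have h1 : x ∈ N.closure (C \ {x}) := circuit_mem_closure_diff hC hxC
        refine N.closure_subset_closure ?_ h1
        intro z hz
        rcases hss hz.1 with rfl | hzI
        · exact absurd rfl hz.2
        · exact ⟨hzI, fun h => hvC (h ▸ hz.1)⟩
    have hvcl : v ∈ N.closure (I \ {v}) := by
      have h1 : v ∈ N.closure J := by
        rw [← hclN]; exact N.subset_closure _ hIN.subset_ground hvI
      exact N.closure_subset_closure_of_subset_closure hkey h1
    exact hIN.notMem_closure_diff_of_mem hvI hvcl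
  · -- v ∈ J \ I : M-arc out of v
    have hvcl : v ∈ M.closure I := by
      rw [hclM]; exact M.subset_closure _ hJM.subset_ground hvJ
    obtain ⟨C, hC, hss, hvC⟩ := exists_fund_circuit hIM hIfin hvcl hvI
    have hCIJ : ∃ y ∈ C, y ∈ I ∧ y ∉ J := by
      by_contra h
      push_neg at h
      have hCJ : C ⊆ J := by
        intro z hz
        rcases hss hz with rfl | hzI
        · exact hvJ
        · exact h z hz hzI
      exact hC.2.1 (hJM.subset hCJ)
    obtain ⟨y, hyC, hyI, hyJ⟩ := hCIJ
    refine ⟨y, Or.inl ⟨hyI, hyJ⟩, Or.inl ⟨⟨hE ▸ hJN.subset_ground hvJ, hvI⟩,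
      hyI, hvcl, C, hC, hss, hvC, hyC⟩⟩

def CycleIn (M N : Matroid α) (I S : Set α) (L : ℕ) (f : ℕ → α) : Prop :=
  (∀ i < L, f i ∈ S) ∧ Set.InjOn f (Set.Iio L) ∧
    ∀ i < L, Arc M N I (f i) (f ((i + 1) % L))

lemma mod_shift_inj {L j m1 m2 : ℕ} (h1 : m1 < L) (h2 : m2 < L)
    (h : (j + m1) % L = (j + m2) % L) : m1 = m2 := by
  rcases le_total m1 m2 with hle | hle
  · have hmod : m1 ≡ m2 [MOD L] := Nat.ModEq.add_left_cancel' j h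
    have hdvd := (Nat.modEq_iff_dvd' hle).1 hmod
    have := Nat.eq_zero_of_dvd_of_lt hdvd
    omega
  · have hmod : m2 ≡ m1 [MOD L] := Nat.ModEq.add_left_cancel' j h.symm
    have hdvd := (Nat.modEq_iff_dvd' hle).1 hmod
    have := Nat.eq_zero_of_dvd_of_lt hdvd
    omega

lemma exists_cycle {M N : Matroid α} {I S : Set α} (hS : S.Finite)
    {v0 : α} (hv0 : v0 ∈ S)
    (hout : ∀ v ∈ S, ∃ w ∈ S, Arc M N I v w) :
    ∃ L f, 0 < L ∧ CycleIn M N I S L f := by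
  classical
  have hout' : ∀ v, ∃ w, v ∈ S → w ∈ S ∧ Arc M N I v w := by
    intro v
    by_cases hv : v ∈ S
    · obtain ⟨w, hw, harc⟩ := hout v hv
      exact ⟨w, fun _ => ⟨hw, harc⟩⟩
    · exact ⟨v, fun h => absurd h hv⟩
  choose nxt hnxt using hout'
  set seq : ℕ → α := fun k => nxt^[k] v0 with hseqdef
  have hseqS : ∀ k, seq k ∈ S := by
    intro k
    induction k with
    | zero => exact hv0
    | succ k ih =>
      have : seq (k + 1) = nxt (seq k) := Function.iterate_succ_apply' nxt k v0
      rw [this]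
      exact (hnxt _ ih).1
  have hseqArc : ∀ k, Arc M N I (seq k) (seq (k + 1)) := by
    intro k
    have : seq (k + 1) = nxt (seq k) := Function.iterate_succ_apply' nxt k v0
    rw [this]
    exact (hnxt _ (hseqS k)).2
  have hninj : ¬ Function.Injective seq := by
    intro hinj
    exact (Set.infinite_of_injective_forall_mem hinj hseqS) hS
  have hPex : ∃ k, ∃ a, a < k ∧ seq a = seq k := by
    simp only [Function.Injective] at hninj
    push_neg at hninj
    obtain ⟨a, b, heq, hne⟩ := hninj
    rcases lt_or_gt_of_ne hne with h | h
    · exact ⟨b, a, h, heq⟩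
    · exact ⟨a, b, h, heq.symm⟩
  set j0 := Nat.find hPex with hj0def
  obtain ⟨a, haj, haeq⟩ := Nat.find_spec hPex
  set L := j0 - a with hLdef
  have hL : 0 < L := by omega
  refine ⟨L, fun m => seq (a + m), hL, fun i _ => hseqS _, ?_, ?_⟩
  · intro x hx y hy heq
    by_contra hne
    rcases lt_or_gt_of_ne hne with h | h
    · have : a + y < j0 := by simp only [mem_Iio] at hy; omega
      exact Nat.find_min hPex this ⟨a + x, by omega, heq⟩
    · have : a + x < j0 := by simp only [mem_Iio] at hx; omega
      exact Nat.find_min hPex this ⟨a + y, by omega, heq.symm⟩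
  · intro i hi
    rcases eq_or_ne (i + 1) L with h | h
    · rw [h, Nat.mod_self]
      have h2 : a + i + 1 = j0 := by omega
      show Arc M N I (seq (a + i)) (seq (a + 0))
      have h3 : seq (a + 0) = seq (a + i + 1) := by rw [h2, Nat.add_zero]; exact haeq
      rw [h3]
      exact hseqArc (a + i)
    · rw [Nat.mod_eq_of_lt (by omega)]
      show Arc M N I (seq (a + i)) (seq (a + (i + 1)))
      have h4 : a + (i + 1) = (a + i) + 1 := by omega
      rw [h4]
      exact hseqArc (a + i)

lemma exists_chordless_cycle {M N : Matroid α} {I S : Set α}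
    (hex : ∃ L f, 0 < L ∧ CycleIn M N I S L f) :
    ∃ L f, 0 < L ∧ CycleIn M N I S L f ∧
      ∀ i < L, ∀ j < L, (Arc M N I (f i) (f j) ↔ j = (i + 1) % L) := by
  classical
  have hex' : ∃ L, 0 < L ∧ ∃ f, CycleIn M N I S L f := by
    obtain ⟨L, f, h1, h2⟩ := hex
    exact ⟨L, h1, f, h2⟩
  set L := Nat.find hex' with hLdef
  obtain ⟨hL, f, hcyc⟩ := Nat.find_spec hex'
  refine ⟨L, f, hL, hcyc, ?_⟩
  intro i hi j hj
  constructor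
  · intro harc
    by_contra hne
    have hij : i ≠ j := by
      intro h
      exact arc_ne harc (by rw [h])
    have h0 : (i + 1) % L = if i + 1 = L then 0 else i + 1 := by
      split_ifs with h
      · rw [h, Nat.mod_self]
      · exact Nat.mod_eq_of_lt (by omega)
    rw [h0] at hne
    set d := if j ≤ i then i - j else i + L - j with hd
    have hd1 : 1 ≤ d := by
      rw [hd]; split_ifs with h <;> omega
    have hd2 : d + 2 ≤ L := by
      rw [hd]
      split_ifs with h <;> split_ifs at hne with h2 <;> omega
    have hjd : (j + d) % L = i := by
      rw [hd]
      split_ifs with h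
      · rw [show j + (i - j) = i by omega, Nat.mod_eq_of_lt hi]
      · rw [show j + (i + L - j) = i + L by omega, Nat.add_mod_right,
          Nat.mod_eq_of_lt hi]
    set g : ℕ → α := fun m => f ((j + m) % L) with hg
    have hcycle' : CycleIn M N I S (d + 1) g := by
      refine ⟨fun m _ => hcyc.1 _ (Nat.mod_lt _ hL), ?_, ?_⟩
      · intro x hx y hy heq
        simp only [mem_Iio] at hx hy
        have := hcyc.2.1 (mem_Iio.2 (Nat.mod_lt (j + x) hL))
          (mem_Iio.2 (Nat.mod_lt (j + y) hL)) heq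
        exact mod_shift_inj (by omega) (by omega) this
      · intro m hm
        rcases eq_or_ne m d with rfl | hmne
        · rw [Nat.mod_self]
          show Arc M N I (f ((j + d) % L)) (f ((j + 0) % L))
          rw [hjd, Nat.add_zero, Nat.mod_eq_of_lt hj]
          exact harc
        · rw [Nat.mod_eq_of_lt (by omega)]
          show Arc M N I (f ((j + m) % L)) (f ((j + (m + 1)) % L))
          have := hcyc.2.2 ((j + m) % L) (Nat.mod_lt _ hL)
          rw [Nat.mod_add_mod, show j + m + 1 = j + (m + 1) by omega] at this
          exact this
    exact Nat.find_min hex' (show d + 1 < L by omega) ⟨by omega, g, hcycle'⟩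
  · intro h
    rw [h]
    exact hcyc.2.2 i hi

lemma cycle_even {M N : Matroid α} {I S : Set α} {L : ℕ} {f : ℕ → α}
    (hL : 0 < L) (hcyc : CycleIn M N I S L f) : Even L := by
  have halt : ∀ m < L, (f ((m + 1) % L) ∈ I ↔ f m ∉ I) := by
    intro m hm
    rcases arc_alt (hcyc.2.2 m hm) with ⟨h1, h2⟩ | ⟨h1, h2⟩
    · exact ⟨fun _ => h1, fun _ => h2⟩
    · exact ⟨fun h => absurd h h2, fun h => absurd h1 h⟩
  have hpar : ∀ m ≤ L, (f (m % L) ∈ I ↔ (Even m ↔ f 0 ∈ I)) := by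
    intro m
    induction m with
    | zero => intro _; rw [Nat.zero_mod]; simp
    | succ m ih =>
      intro hm1
      have h1 := ih (by omega)
      rw [Nat.mod_eq_of_lt (by omega)] at h1
      have h2 := halt m (by omega)
      rw [h2, Nat.even_add_one]
      tauto
  have hfin := hpar L le_rfl
  rw [Nat.mod_self] at hfin
  tauto

lemma forward {M N : Matroid α} (hE : M.E = N.E) :
    ∀ k (I J : Set α), (I ∆ J).ncard = k →
    I.Finite → M.Indep I → N.Indep I → J.Finite → M.Indep J → N.Indep J →
    M.closure I = M.closure J → N.closure I = N.closure J →
    ∃ (n : ℕ) (g : ℕ → Set α), g 0 = I ∧ g n = J ∧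
      (∀ i ≤ n, (g i).Finite ∧ M.Indep (g i) ∧ N.Indep (g i)) ∧
      ∀ i < n, ∃ O, SwitchCycle M N (g i) O ∧ g (i + 1) = g i ∆ O := by
  intro k
  induction k using Nat.strong_induction_on with
  | _ k IH =>
  intro I J hk hIfin hIM hIN hJfin hJM hJN hclM hclN
  rcases eq_or_ne I J with rfl | hne
  · exact ⟨0, fun _ => I, rfl, rfl, fun i _ => ⟨hIfin, hIM, hIN⟩,
      fun i h => absurd h (by omega)⟩
  have hSne : (I ∆ J).Nonempty := by
    rw [Set.nonempty_iff_ne_empty]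
    intro h
    exact hne (symmDiff_eq_bot.1 (by rw [h]; exact Set.bot_eq_empty.symm))
  obtain ⟨v0, hv0⟩ := hSne
  have hSfin : (I ∆ J).Finite :=
    (hIfin.union hJfin).subset symmDiff_subset_union
  have hout := exists_out_arc hE hIM hIN hIfin hJM hJN hclM hclN
  obtain ⟨L, f, hL, hcyc, hchord⟩ :=
    exists_chordless_cycle (exists_cycle hSfin hv0 hout)
  have heven : Even L := cycle_even hL hcyc
  have hL2 : 2 ≤ L := by
    rcases heven with ⟨c, hc⟩; omega
  set O := f '' Set.Iio L with hO
  have hOE : O ⊆ M.E := by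
    rintro x ⟨i, hi, rfl⟩
    rcases hcyc.1 i hi with ⟨h1, _⟩ | ⟨h1, _⟩
    exacts [hIM.subset_ground h1, hJM.subset_ground h1]
  have hSC : SwitchCycle M N I O := by
    obtain ⟨c, hc⟩ := heven
    refine ⟨c - 1, f, ?_, ?_, ?_, ?_⟩
    · rw [show 2 * (c - 1) + 2 = L by omega]
    · exact hOE
    · rw [show 2 * (c - 1) + 2 = L by omega]; exact hcyc.2.1
    · rw [show 2 * (c - 1) + 2 = L by omega]; exact hchord
  obtain ⟨hI2M, hI2N, hI2fin, hclM2, hclN2⟩ := switchCycle_step hIM hIN hIfin hSC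
  set I2 := I ∆ O with hI2
  have hOsub : O ⊆ I ∆ J := by
    rintro x ⟨i, hi, rfl⟩
    exact hcyc.1 i hi
  have hdiff : I2 ∆ J = (I ∆ J) \ O := by
    ext z
    have hOz := @hOsub z
    simp only [hI2, Set.mem_symmDiff, mem_diff] at *
    tauto
  have hlt : (I2 ∆ J).ncard < k := by
    rw [hdiff, ← hk]
    apply Set.ncard_lt_ncard _ hSfin
    constructor
    · exact diff_subset
    · intro hsub
      have h1 : f 0 ∈ O := ⟨0, mem_Iio.2 (by omega), rfl⟩
      have h2 := hsub (hOsub h1)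
      exact h2.2 h1
  obtain ⟨n, g, hg0, hgn, hgprop, hgstep⟩ := IH _ hlt I2 J rfl hI2fin hI2M hI2N
    hJfin hJM hJN (hclM2.trans hclM) (hclN2.trans hclN)
  refine ⟨n + 1, fun i => if i = 0 then I else g (i - 1), by simp, by simp [hgn], ?_, ?_⟩
  · intro i hi
    rcases Nat.eq_zero_or_pos i with rfl | hp
    · simpa using ⟨hIfin, hIM, hIN⟩
    · have e1 : (fun i => if i = 0 then I else g (i - 1)) i = g (i - 1) := by
        simp [show i ≠ 0 by omega]
      rw [e1]
      exact hgprop (i - 1) (by omega)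
  · intro i hi
    rcases Nat.eq_zero_or_pos i with rfl | hp
    · refine ⟨O, by simpa using hSC, ?_⟩
      simp [hg0, hI2]
    · obtain ⟨O', h1, h2⟩ := hgstep (i - 1) (by omega)
      refine ⟨O', ?_, ?_⟩
      · have e1 : (fun i => if i = 0 then I else g (i - 1)) i = g (i - 1) := by
          simp [show i ≠ 0 by omega]
        rw [e1]
        exact h1
      · have e1 : (fun i => if i = 0 then I else g (i - 1)) i = g (i - 1) := by
          simp [show i ≠ 0 by omega]
        have e2 : (fun i => if i = 0 then I else g (i - 1)) (i + 1) = g (i - 1 + 1) := by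
          simp [show i + 1 - 1 = i - 1 + 1 by omega]
        rw [e1, e2]
        exact h2


/-- `I ∼ J` iff `J` can be obtained from `I` by finitely many applications of
switching cycles, through finite common independent sets. -/
theorem statement11 (M N : Matroid α) [M.Finitary] [N.Finitary] (hE : M.E = N.E)
    (I J : Set α) (hIfin : I.Finite) (hIM : M.Indep I) (hIN : N.Indep I)
    (hJfin : J.Finite) (hJM : M.Indep J) (hJN : N.Indep J) :
    Sim M N I J ↔
      ∃ (n : ℕ) (g : ℕ → Set α), g 0 = I ∧ g n = J ∧
        (∀ i ≤ n, (g i).Finite ∧ M.Indep (g i) ∧ N.Indep (g i)) ∧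
        ∀ i < n, ∃ O, SwitchCycle M N (g i) O ∧ g (i + 1) = g i ∆ O := by
  constructor
  · rintro ⟨h1, h2⟩
    have hclM : M.closure I = M.closure J := subset_antisymm
      (M.closure_subset_closure_of_subset_closure (fun x hx => (h1 hx).1))
      (M.closure_subset_closure_of_subset_closure (fun x hx => (h2 hx).1))
    have hclN : N.closure I = N.closure J := subset_antisymm
      (N.closure_subset_closure_of_subset_closure (fun x hx => (h1 hx).2))
      (N.closure_subset_closure_of_subset_closure (fun x hx => (h2 hx).2))
    exact forward hE _ I J rfl hIfin hIM hIN hJfin hJM hJN hclM hclN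
  · rintro ⟨n, g, hg0, hgn, hprop, hstep⟩
    have hcl : ∀ i ≤ n, M.closure (g i) = M.closure I ∧
        N.closure (g i) = N.closure I := by
      intro i
      induction i with
      | zero => intro _; rw [hg0]; exact ⟨rfl, rfl⟩
      | succ i ih =>
        intro hi
        obtain ⟨O, hO, heq⟩ := hstep i (by omega)
        obtain ⟨hfin, hM, hN⟩ := hprop i (by omega)
        obtain ⟨_, _, _, hclM, hclN⟩ := switchCycle_step hM hN hfin hO
        obtain ⟨ih1, ih2⟩ := ih (by omega)
        rw [heq]
        exact ⟨hclM.trans ih1, hclN.trans ih2⟩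
    obtain ⟨hMeq, hNeq⟩ := hcl n le_rfl
    rw [hgn] at hMeq hNeq
    have hIJM : I ⊆ M.closure J := by
      rw [hMeq]; exact M.subset_closure I hIM.subset_ground
    have hIJN : I ⊆ N.closure J := by
      rw [hNeq]; exact N.subset_closure I hIN.subset_ground
    have hJIM : J ⊆ M.closure I := by
      rw [← hMeq]; exact M.subset_closure J hJM.subset_ground
    have hJIN : J ⊆ N.closure I := by
      rw [← hNeq]; exact N.subset_closure J hJN.subset_ground
    exact ⟨fun x hx => ⟨hIJM hx, hIJN hx⟩, fun x hx => ⟨hJIM hx, hJIN hx⟩⟩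

end AZ
end

section
/- If I and J are finite common independent sets of M and N with I ∼ J, and y ∈ E is reachable from x ∈ E by a directed path in the exchange digraph D(I), then y is reachable from x by a directed path in D(J). -/
open Set Matroid
open scoped symmDiff

namespace AZ

variable {α : Type*}

/-- An element of a circuit lies in the closure of the rest of the circuit. -/
lemma circuit_mem_closure {M : Matroid α} {C : Set α} (hC : Circuit M C) {z : α} (hz : z ∈ C) :
    z ∈ M.closure (C \ {z}) := by
  have hCz : M.Indep (C \ {z}) := hC.2.2 _ (sdiff_singleton_ssubset.2 hz)
  by_contra h
  have hind : M.Indep (insert z (C \ {z})) := by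
    rw [hCz.insert_indep_iff_of_notMem (by simp)]
    exact ⟨hC.1 hz, h⟩
  rw [insert_diff_singleton, insert_eq_of_mem hz] at hind
  exact hC.2.1 hind

/-- Existence of a fundamental circuit over a finite independent set. -/
lemma exists_circuit {M : Matroid α} {K : Set α} (hK : M.Indep K) (hfin : K.Finite) {z : α}
    (hzE : z ∈ M.E) (hz : z ∈ M.closure K) (hzK : z ∉ K) :
    ∃ C, Circuit M C ∧ C ⊆ insert z K ∧ z ∈ C := by
  have hdep : ¬ M.Indep (insert z K) := by
    rw [hK.insert_indep_iff_of_notMem hzK]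
    exact fun h => h.2 hz
  have hfam : {D : Set α | D ⊆ insert z K ∧ ¬ M.Indep D}.Finite :=
    Set.Finite.subset (hfin.insert z).finite_subsets (fun D hD => hD.1)
  obtain ⟨D, hD, hmin⟩ : ∃ D ∈ {D : Set α | D ⊆ insert z K ∧ ¬ M.Indep D}, ∀ D' ∈ {D : Set α | D ⊆ insert z K ∧ ¬ M.Indep D}, id D' ≤ id D → id D = id D' := by
    obtain ⟨D, hD, hm⟩ := hfam.exists_minimal ⟨insert z K, Subset.rfl, hdep⟩
    exact ⟨D, hD, fun D' h1 h2 => le_antisymm (hm h1 h2) h2⟩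
  refine ⟨D, ⟨hD.1.trans (insert_subset hzE hK.subset_ground), hD.2, ?_⟩, hD.1, ?_⟩
  · intro D' hD'
    by_contra hdep'
    exact hD'.ne ((hmin D' ⟨hD'.subset.trans hD.1, hdep'⟩ hD'.subset).symm)
  · by_contra hzD
    exact hD.2 (hK.subset (fun w hw =>
      (mem_insert_iff.1 (hD.1 hw)).resolve_left (fun h => hzD (h ▸ hw))))

/-- If `y` lies in a circuit contained in `I + x` together with `x`, then
`x ∉ closure (I \ {y})`. -/
lemma arc_closure_aux {M : Matroid α} {I C : Set α} {x y : α} (hI : M.Indep I)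
    (hxI : x ∉ I) (hyI : y ∈ I) (hC : Circuit M C) (hCsub : C ⊆ insert x I)
    (hyC : y ∈ C) : x ∉ M.closure (I \ {y}) := by
  intro hx
  have h1 : y ∈ M.closure (C \ {y}) := circuit_mem_closure hC hyC
  have h2 : C \ {y} ⊆ insert x (I \ {y}) := by
    intro w hw
    rcases mem_insert_iff.1 (hCsub hw.1) with h | h
    · exact Or.inl h
    · exact Or.inr ⟨h, hw.2⟩
  have h3 : y ∈ M.closure (insert x (I \ {y})) := M.closure_subset_closure h2 h1
  have h4 : M.closure (insert x (I \ {y})) = M.closure (I \ {y}) := by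
    rw [← M.closure_insert_closure_eq_closure_insert, insert_eq_of_mem hx, closure_closure]
  exact hI.notMem_closure_diff_of_mem hyI (h4 ▸ h3)

/-- An independent set contained in the span of a finite independent set is no larger. -/
lemma ncard_le_of_subset_closure {M : Matroid α} {X Y : Set α} (hX : M.Indep X)
    (hY : M.Indep Y) (hYfin : Y.Finite) (hXY : X ⊆ M.closure Y) : X.ncard ≤ Y.ncard := by
  obtain ⟨X', hX', hXX'⟩ := hX.subset_isBasis_of_subset hXY (M.closure_subset_ground Y)
  have h1 : X'.encard = Y.encard := hX'.encard_eq_encard hY.isBasis_closure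
  have hX'fin : X'.Finite := by
    rw [← encard_lt_top_iff, h1]; exact hYfin.encard_lt_top
  have h2 : X'.ncard = Y.ncard := by rw [Set.ncard_def, Set.ncard_def, h1]
  exact (Set.ncard_le_ncard hXX' hX'fin).trans h2.le

/-- Equal-sized independent sets, one in the span of the other, have equal spans. -/
lemma closure_eq_of_subset_closure {M : Matroid α} {X Y : Set α} (hX : M.Indep X)
    (hY : M.Indep Y) (hYfin : Y.Finite) (hXY : X ⊆ M.closure Y)
    (hcard : Y.ncard ≤ X.ncard) : M.closure X = M.closure Y := by
  obtain ⟨X', hX', hXX'⟩ := hX.subset_isBasis_of_subset hXY (M.closure_subset_ground Y)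
  have h1 : X'.encard = Y.encard := hX'.encard_eq_encard hY.isBasis_closure
  have hX'fin : X'.Finite := by
    rw [← encard_lt_top_iff, h1]; exact hYfin.encard_lt_top
  have h2 : X'.ncard = Y.ncard := by rw [Set.ncard_def, Set.ncard_def, h1]
  have hXeq : X = X' :=
    Set.eq_of_subset_of_ncard_le hXX' (h2.le.trans hcard) hX'fin
  rw [hXeq, hX'.closure_eq_closure, closure_closure]

/-- The one-arc case of `statement12`: an arc of `D(I)` yields a directed path in `D(J)`. -/
lemma arc_reach (M N : Matroid α) {I J : Set α} (hE : M.E = N.E)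
    (hIfin : I.Finite) (hIM : M.Indep I) (hIN : N.Indep I)
    (hJfin : J.Finite) (hJM : M.Indep J) (hJN : N.Indep J) (hsim : Sim M N I J)
    {u v : α} (harc : Arc M N I u v) :
    Relation.ReflTransGen (Arc M N J) u v := by
  by_contra hvR
  set R : Set α := {z | Relation.ReflTransGen (Arc M N J) u z} with hRdef
  have huR : u ∈ R := Relation.ReflTransGen.refl
  have hMIJ : M.closure I = M.closure J :=
    (M.closure_subset_closure_of_subset_closure (fun z hz => (hsim.1 hz).1)).antisymm
      (M.closure_subset_closure_of_subset_closure (fun z hz => (hsim.2 hz).1))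
  have hNIJ : N.closure I = N.closure J :=
    (N.closure_subset_closure_of_subset_closure (fun z hz => (hsim.1 hz).2)).antisymm
      (N.closure_subset_closure_of_subset_closure (fun z hz => (hsim.2 hz).2))
  -- reachable elements outside J are spanned (in M) by the reachable part of J
  have P1 : ∀ z ∈ R, z ∈ M.E → z ∉ J → z ∈ M.closure J → z ∈ M.closure (J ∩ R) := by
    intro z hzR hzE hzJ hzcl
    obtain ⟨C, hC, hCsub, hzC⟩ := exists_circuit hJM hJfin hzE hzcl hzJ
    have hsub : C \ {z} ⊆ J ∩ R := by
      intro w hw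
      have hwz : w ≠ z := by simpa using hw.2
      have hwJ : w ∈ J := (mem_insert_iff.1 (hCsub hw.1)).resolve_left hwz
      exact ⟨hwJ, Relation.ReflTransGen.tail hzR
        (Or.inl ⟨⟨hzE, hzJ⟩, hwJ, hzcl, C, hC, hCsub, hzC, hw.1⟩)⟩
    exact M.closure_subset_closure hsub (circuit_mem_closure hC hzC)
  -- unreachable elements outside J are spanned (in N) by the unreachable part of J
  have P2 : ∀ z, z ∉ R → z ∈ M.E → z ∉ J → z ∈ N.closure J → z ∈ N.closure (J \ R) := by
    intro z hzR hzE hzJ hzcl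
    obtain ⟨C, hC, hCsub, hzC⟩ := exists_circuit hJN hJfin (hE ▸ hzE) hzcl hzJ
    have hsub : C \ {z} ⊆ J \ R := by
      intro w hw
      have hwz : w ≠ z := by simpa using hw.2
      have hwJ : w ∈ J := (mem_insert_iff.1 (hCsub hw.1)).resolve_left hwz
      exact ⟨hwJ, fun hwR => hzR (Relation.ReflTransGen.tail hwR
        (Or.inr ⟨hwJ, ⟨hzE, hzJ⟩, hzcl, C, hC, hCsub, hzC, hw.1⟩))⟩
    exact N.closure_subset_closure hsub (circuit_mem_closure hC hzC)
  have hIR_cl : I ∩ R ⊆ M.closure (J ∩ R) := by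
    intro z hz
    by_cases hzJ : z ∈ J
    · exact M.subset_closure _ (inter_subset_left.trans hJM.subset_ground) ⟨hzJ, hz.2⟩
    · exact P1 z hz.2 (hIM.subset_ground hz.1) hzJ (hsim.1 hz.1).1
  have hInR_cl : I \ R ⊆ N.closure (J \ R) := by
    intro z hz
    by_cases hzJ : z ∈ J
    · exact N.subset_closure _ ((diff_subset).trans hJN.subset_ground) ⟨hzJ, hz.2⟩
    · exact P2 z hz.2 (hIM.subset_ground hz.1) hzJ (hsim.1 hz.1).2
  have hIJcard : I.ncard = J.ncard :=
    le_antisymm (ncard_le_of_subset_closure hIM hJM hJfin (fun z hz => (hsim.1 hz).1))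
      (ncard_le_of_subset_closure hJM hIM hIfin (fun z hz => (hsim.2 hz).1))
  have h1 : (I ∩ R).ncard ≤ (J ∩ R).ncard :=
    ncard_le_of_subset_closure (hIM.subset inter_subset_left) (hJM.subset inter_subset_left)
      (hJfin.subset inter_subset_left) hIR_cl
  have h2 : (I \ R).ncard ≤ (J \ R).ncard :=
    ncard_le_of_subset_closure (hIN.subset diff_subset) (hJN.subset diff_subset)
      (hJfin.subset diff_subset) hInR_cl
  have hsumI : (I ∩ R).ncard + (I \ R).ncard = I.ncard :=
    Set.ncard_inter_add_ncard_diff_eq_ncard I R hIfin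
  have hsumJ : (J ∩ R).ncard + (J \ R).ncard = J.ncard :=
    Set.ncard_inter_add_ncard_diff_eq_ncard J R hJfin
  have hc1 : (J ∩ R).ncard ≤ (I ∩ R).ncard := by omega
  have hc2 : (J \ R).ncard ≤ (I \ R).ncard := by omega
  have hclM : M.closure (I ∩ R) = M.closure (J ∩ R) :=
    closure_eq_of_subset_closure (hIM.subset inter_subset_left)
      (hJM.subset inter_subset_left) (hJfin.subset inter_subset_left) hIR_cl hc1
  have hclN : N.closure (I \ R) = N.closure (J \ R) :=
    closure_eq_of_subset_closure (hIN.subset diff_subset)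
      (hJN.subset diff_subset) (hJfin.subset diff_subset) hInR_cl hc2
  have hvR' : v ∉ R := hvR
  rcases harc with ⟨⟨huE, huI⟩, hvI, hucl, C, hC, hCsub, huC, hvC⟩ |
      ⟨huI, ⟨hvE, hvI⟩, hvcl, C, hC, hCsub, hvC, huC⟩
  · -- M-arc case
    have hnot : u ∉ M.closure (I \ {v}) := arc_closure_aux hIM huI hvI hC hCsub hvC
    have huJR : u ∈ M.closure (J ∩ R) := by
      by_cases huJ : u ∈ J
      · exact M.subset_closure _ (inter_subset_left.trans hJM.subset_ground) ⟨huJ, huR⟩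
      · exact P1 u huR huE huJ (hMIJ ▸ hucl)
    have : u ∈ M.closure (I \ {v}) := by
      refine M.closure_subset_closure ?_ (hclM ▸ huJR)
      intro z hz
      exact ⟨hz.1, fun h => hvR' ((mem_singleton_iff.1 h) ▸ hz.2)⟩
    exact hnot this
  · -- N-arc case
    have hnot : v ∉ N.closure (I \ {u}) := arc_closure_aux hIN hvI huI hC hCsub huC
    have hvJR : v ∈ N.closure (J \ R) := by
      by_cases hvJ : v ∈ J
      · exact N.subset_closure _ ((diff_subset).trans hJN.subset_ground) ⟨hvJ, hvR'⟩
      · exact P2 v hvR' hvE hvJ (hNIJ ▸ hvcl)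
    have : v ∈ N.closure (I \ {u}) := by
      refine N.closure_subset_closure ?_ (hclN ▸ hvJR)
      intro z hz
      exact ⟨hz.1, fun h => hz.2 ((mem_singleton_iff.1 h) ▸ huR)⟩
    exact hnot this

/-- If `I ∼ J` and `y` is reachable from `x` by a directed path in `D(I)`, then `y` is
reachable from `x` by a directed path in `D(J)`. -/
theorem statement12 (M N : Matroid α) [M.Finitary] [N.Finitary] (hE : M.E = N.E)
    (I J : Set α) (hIfin : I.Finite) (hIM : M.Indep I) (hIN : N.Indep I)
    (hJfin : J.Finite) (hJM : M.Indep J) (hJN : N.Indep J) (hsim : Sim M N I J)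
    (x y : α) (hxy : Relation.ReflTransGen (Arc M N I) x y) :
    Relation.ReflTransGen (Arc M N J) x y := by
  induction hxy with
  | refl => exact Relation.ReflTransGen.refl
  | tail h harc ih =>
      exact ih.trans (arc_reach M N hE hIfin hIM hIN hJfin hJM hJN hsim harc)

end AZ
end
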